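/- For every w ∈ S_n and every pair (i,j) in the essential set Ess(w), the unique element of BM(w) whose unique right descent is i and whose unique left descent is j equals the bigrassmannian permutation b(j, i, t_w(i,j) − 1), where t_w is the co-rank function of w. -/

import Mathlib

namespace Paper

/-- The simple transposition `s_i = (i, i+1)` (1-based) in `S_n`, realized as a
permutation of `Fin n`. For `i` outside `{1, …, n-1}` we set `s i = 1`. -/
def s (n i : ℕ) : Equiv.Perm (Fin n) :=
  if h : 1 ≤ i ∧ i < n then Equiv.swap ⟨i - 1, by omega⟩ ⟨i, by omega⟩ else 1

/-- The length of a permutation: its number of inversions. -/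
def len {n : ℕ} (w : Equiv.Perm (Fin n)) : ℕ :=
  (Finset.univ.filter (fun p : Fin n × Fin n => p.1 < p.2 ∧ w p.2 < w p.1)).card

/-- `i` is a left descent of `w` if `1 ≤ i ≤ n-1` and `ℓ(s_i w) < ℓ(w)`. -/
def IsLeftDescent {n : ℕ} (w : Equiv.Perm (Fin n)) (i : ℕ) : Prop :=
  1 ≤ i ∧ i ≤ n - 1 ∧ len (s n i * w) < len w

/-- `i` is a right descent of `w` if `1 ≤ i ≤ n-1` and `ℓ(w s_i) < ℓ(w)`. -/
def IsRightDescent {n : ℕ} (w : Equiv.Perm (Fin n)) (i : ℕ) : Prop :=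
  1 ≤ i ∧ i ≤ n - 1 ∧ len (w * s n i) < len w

/-- A permutation is bigrassmannian if it has exactly one left descent and
exactly one right descent. -/
def Bigrassmannian {n : ℕ} (w : Equiv.Perm (Fin n)) : Prop :=
  (∃! i, IsLeftDescent w i) ∧ (∃! j, IsRightDescent w j)

/-- One step of the Bruhat order: `w ⋖ t * w` for a transposition `t`
with `ℓ(w) < ℓ(t w)`. -/
def BruhatStep {n : ℕ} (w w' : Equiv.Perm (Fin n)) : Prop :=
  ∃ a b : Fin n, a ≠ b ∧ w' = Equiv.swap a b * w ∧ len w < len w'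

/-- The Bruhat order on `S_n`: the partial order generated by `w < tw` whenever
`t` is a transposition and `ℓ(w) < ℓ(tw)`. -/
def BruhatLE {n : ℕ} : Equiv.Perm (Fin n) → Equiv.Perm (Fin n) → Prop :=
  Relation.ReflTransGen BruhatStep

/-- Strict Bruhat order. -/
def BruhatLT {n : ℕ} (x y : Equiv.Perm (Fin n)) : Prop :=
  BruhatLE x y ∧ x ≠ y

/-- The product `s_a s_{a+1} ⋯ s_b` of consecutive simple transpositions. -/
def ascRun (n a b : ℕ) : Equiv.Perm (Fin n) :=
  ((List.range (b + 1 - a)).map (fun t => s n (a + t))).prod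

/-- For `i ≤ j`: `b(i,j,k) = (s_i ⋯ s_{j+k})(s_{i-1} ⋯ s_{j+k-1}) ⋯ (s_{i-k} ⋯ s_j)`. -/
def bAux (n i j k : ℕ) : Equiv.Perm (Fin n) :=
  ((List.range (k + 1)).map (fun m => ascRun n (i - m) (j + k - m))).prod

/-- The bigrassmannian permutation `b(i,j,k)`; for `j < i` it is `b(j,i,k)⁻¹`. -/
def b (n i j k : ℕ) : Equiv.Perm (Fin n) :=
  if i ≤ j then bAux n i j k else (bAux n j i k)⁻¹

/-- The value `w(i)` of a permutation `w ∈ S_n` at `i ∈ {1, …, n}`, 1-based. -/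
def act {n : ℕ} (w : Equiv.Perm (Fin n)) (i : ℕ) : ℕ :=
  if h : 1 ≤ i ∧ i ≤ n then ((w ⟨i - 1, by omega⟩ : Fin n) : ℕ) + 1 else i

/-- The essential set of a permutation `w ∈ S_n`. -/
def Ess {n : ℕ} (w : Equiv.Perm (Fin n)) : Set (ℕ × ℕ) :=
  {p | 1 ≤ p.1 ∧ p.1 ≤ n - 1 ∧ 1 ≤ p.2 ∧ p.2 ≤ n - 1 ∧
    p.1 < act w⁻¹ p.2 ∧ p.2 < act w p.1 ∧
    act w (p.1 + 1) ≤ p.2 ∧ act w⁻¹ (p.2 + 1) ≤ p.1}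

/-- The rank function `r_w(i,j) = |{k ≤ i : w(k) ≤ j}|` (1-based). -/
def rnk {n : ℕ} (w : Equiv.Perm (Fin n)) (i j : ℕ) : ℕ :=
  ((Finset.Icc 1 i).filter (fun k => act w k ≤ j)).card

/-- The co-rank function `t_w(i,j) = min{i,j} - r_w(i,j)`. -/
def cork {n : ℕ} (w : Equiv.Perm (Fin n)) (i j : ℕ) : ℕ :=
  min i j - rnk w i j

/-- The set of bigrassmannian permutations `y ≤ w` in Bruhat order. -/
def BSet {n : ℕ} (w : Equiv.Perm (Fin n)) : Set (Equiv.Perm (Fin n)) :=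
  {y | Bigrassmannian y ∧ BruhatLE y w}

/-- The set of Bruhat-maximal elements of `BSet w`. -/
def BM {n : ℕ} (w : Equiv.Perm (Fin n)) : Set (Equiv.Perm (Fin n)) :=
  {y ∈ BSet w | ∀ z ∈ BSet w, BruhatLE y z → z = y}


open Finset Equiv

variable {n : ℕ}

/-! ### Section 1: basics about `act` -/

lemma act_of_mem (w : Equiv.Perm (Fin n)) {p : ℕ} (h1 : 1 ≤ p) (h2 : p ≤ n) :
    act w p = ((w ⟨p - 1, by omega⟩ : Fin n) : ℕ) + 1 := by
  unfold act; rw [dif_pos ⟨h1, h2⟩]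

lemma act_of_not_mem (w : Equiv.Perm (Fin n)) {p : ℕ} (h : ¬ (1 ≤ p ∧ p ≤ n)) :
    act w p = p := by
  unfold act; rw [dif_neg h]

lemma act_pos (w : Equiv.Perm (Fin n)) {p : ℕ} (h1 : 1 ≤ p) : 1 ≤ act w p := by
  by_cases h : 1 ≤ p ∧ p ≤ n
  · rw [act_of_mem w h.1 h.2]; omega
  · rw [act_of_not_mem w h]; omega

lemma act_le (w : Equiv.Perm (Fin n)) {p : ℕ} (h1 : 1 ≤ p) (h2 : p ≤ n) :
    act w p ≤ n := by
  rw [act_of_mem w h1 h2]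
  have := (w ⟨p - 1, by omega⟩).isLt; omega

lemma act_inv_act (w : Equiv.Perm (Fin n)) {p : ℕ} (h1 : 1 ≤ p) (h2 : p ≤ n) :
    act w⁻¹ (act w p) = p := by
  rw [act_of_mem w h1 h2]
  rw [act_of_mem w⁻¹ (by omega) (by have := (w ⟨p - 1, by omega⟩).isLt; omega)]
  have : (⟨(w ⟨p - 1, by omega⟩ : Fin n) + 1 - 1, by have := (w ⟨p-1, by omega⟩).isLt; omega⟩ : Fin n)
      = w ⟨p - 1, by omega⟩ := by
    apply Fin.ext; simp
  rw [this, ← Equiv.Perm.mul_apply, inv_mul_cancel, Equiv.Perm.one_apply]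
  simp only [Fin.val_mk]
  omega

lemma act_act_inv (w : Equiv.Perm (Fin n)) {v : ℕ} (h1 : 1 ≤ v) (h2 : v ≤ n) :
    act w (act w⁻¹ v) = v := by
  have := act_inv_act w⁻¹ h1 h2
  rwa [inv_inv] at this

lemma act_injective (w : Equiv.Perm (Fin n)) : Function.Injective (act w) := by
  intro p q h
  by_cases hp : 1 ≤ p ∧ p ≤ n <;> by_cases hq : 1 ≤ q ∧ q ≤ n
  · have h1 := act_inv_act w hp.1 hp.2
    have h2 := act_inv_act w hq.1 hq.2
    rw [h] at h1; omega
  · exfalso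
    have h1 := act_le w hp.1 hp.2
    have h2 := act_pos w hp.1
    rw [act_of_not_mem w hq] at h; omega
  · exfalso
    have h1 := act_le w hq.1 hq.2
    have h2 := act_pos w hq.1
    rw [act_of_not_mem w hp] at h; omega
  · rwa [act_of_not_mem w hp, act_of_not_mem w hq] at h

lemma perm_ext_of_act {x w : Equiv.Perm (Fin n)}
    (h : ∀ p, 1 ≤ p → p ≤ n → act x p = act w p) : x = w := by
  apply Equiv.ext
  intro m
  have hm := m.isLt
  have := h (m.val + 1) (by omega) (by omega)
  rw [act_of_mem x (by omega) (by omega), act_of_mem w (by omega) (by omega)] at this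
  have hx : (⟨m.val + 1 - 1, by omega⟩ : Fin n) = m := by apply Fin.ext; simp
  rw [hx] at this
  apply Fin.ext; omega

/-! ### Section 2: basics about `rnk` -/

lemma rnk_zero (w : Equiv.Perm (Fin n)) (q : ℕ) : rnk w 0 q = 0 := by
  unfold rnk; simp

lemma Icc_succ_right' (a p : ℕ) (h : a ≤ p + 1) :
    Finset.Icc a (p + 1) = insert (p + 1) (Finset.Icc a p) := by
  ext k; simp only [Finset.mem_Icc, Finset.mem_insert]; omega

lemma rnk_succ (w : Equiv.Perm (Fin n)) (p q : ℕ) :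
    rnk w (p + 1) q = rnk w p q + (if act w (p + 1) ≤ q then 1 else 0) := by
  unfold rnk
  rw [Icc_succ_right' 1 p (by omega), Finset.filter_insert]
  split_ifs with h
  · rw [Finset.card_insert_of_notMem (by simp)]
  · omega

lemma rnk_le_p (w : Equiv.Perm (Fin n)) (p q : ℕ) : rnk w p q ≤ p := by
  unfold rnk
  calc _ ≤ (Finset.Icc 1 p).card := Finset.card_filter_le _ _
  _ = p := by rw [Nat.card_Icc]; omega

lemma rnk_mono_p (w : Equiv.Perm (Fin n)) {p p' : ℕ} (q : ℕ) (h : p' ≤ p) :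
    rnk w p' q ≤ rnk w p q := by
  apply Finset.card_le_card
  apply Finset.filter_subset_filter
  exact Finset.Icc_subset_Icc le_rfl h

lemma rnk_mono_q (w : Equiv.Perm (Fin n)) (p : ℕ) {q q' : ℕ} (h : q' ≤ q) :
    rnk w p q' ≤ rnk w p q := by
  apply Finset.card_le_card
  intro k hk
  simp only [rnk, Finset.mem_filter] at *
  exact ⟨hk.1, hk.2.trans h⟩

lemma rnk_le_q (w : Equiv.Perm (Fin n)) (p q : ℕ) : rnk w p q ≤ q := by
  unfold rnk
  have h2 : ((Finset.Icc 1 p).filter (fun k => act w k ≤ q)).card ≤ (Finset.Icc 1 q).card := by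
    apply Finset.card_le_card_of_injOn (act w)
    · intro k hk
      simp only [Finset.mem_coe, Finset.mem_filter, Finset.mem_Icc] at *
      exact ⟨act_pos w hk.1.1, hk.2⟩
    · intro a _ b _ hab
      exact act_injective w hab
  rw [Nat.card_Icc] at h2
  omega

lemma rnk_congr {x w : Equiv.Perm (Fin n)} {p : ℕ} (q : ℕ)
    (h : ∀ k, 1 ≤ k → k ≤ p → act x k = act w k) : rnk x p q = rnk w p q := by
  unfold rnk
  congr 1
  apply Finset.filter_congr
  intro k hk
  simp only [Finset.mem_Icc] at hk
  rw [h k hk.1 hk.2]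

lemma rnk_split (w : Equiv.Perm (Fin n)) {p' p : ℕ} (q : ℕ) (h : p' ≤ p) :
    rnk w p q = rnk w p' q + ((Finset.Icc (p' + 1) p).filter (fun k => act w k ≤ q)).card := by
  unfold rnk
  rw [← Finset.card_union_of_disjoint, ← Finset.filter_union]
  · congr 2
    ext k; simp only [Finset.mem_union, Finset.mem_Icc]; omega
  · apply Finset.disjoint_filter_filter
    rw [Finset.disjoint_left]
    intro k hk hk'
    simp only [Finset.mem_Icc] at *
    omega

lemma rnk_col_split (w : Equiv.Perm (Fin n)) (p : ℕ) {q' q : ℕ} (h : q' ≤ q) :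
    rnk w p q = rnk w p q' +
      ((Finset.Icc 1 p).filter (fun k => q' < act w k ∧ act w k ≤ q)).card := by
  unfold rnk
  have heq : (Finset.Icc 1 p).filter (fun k => act w k ≤ q)
      = (Finset.Icc 1 p).filter (fun k => act w k ≤ q') ∪
        (Finset.Icc 1 p).filter (fun k => q' < act w k ∧ act w k ≤ q) := by
    rw [← Finset.filter_or]
    apply Finset.filter_congr
    intro k _
    constructor
    · intro hk
      omega
    · intro hk
      omega
  rw [heq, Finset.card_union_of_disjoint]
  apply Finset.disjoint_filter_filter'
  rw [disjoint_iff_inf_le]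
  intro k hk
  simp only [Pi.inf_apply, inf_Prop_eq] at hk
  omega

/-! ### Section 3: length and swaps -/

def invSet (z : Equiv.Perm (Fin n)) : Finset (Fin n × Fin n) :=
  Finset.univ.filter (fun pr : Fin n × Fin n => pr.1 < pr.2 ∧ z pr.2 < z pr.1)

lemma len_eq_invSet (z : Equiv.Perm (Fin n)) : len z = (invSet z).card := rfl

lemma mem_invSet {z : Equiv.Perm (Fin n)} {u v : Fin n} :
    (u, v) ∈ invSet z ↔ u < v ∧ z v < z u := by
  simp [invSet]

lemma len_swap_adjacent (x : Equiv.Perm (Fin n)) (p q : Fin n)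
    (hq : (q : ℕ) = (p : ℕ) + 1) (hv : x p < x q) :
    len (x * Equiv.swap p q) = len x + 1 := by
  have hpq : p ≠ q := by intro h; rw [h] at hq; omega
  set σ := Equiv.swap p q with hσ
  set x' := x * σ with hx'
  have happ : ∀ t, x' t = x (σ t) := fun t => rfl
  have hσp : σ p = q := Equiv.swap_apply_left p q
  have hσq : σ q = p := Equiv.swap_apply_right p q
  have hsorted : ∀ u v : Fin n, u < v → (u, v) ≠ (p, q) → σ u < σ v := by
    intro u v huv hne
    rw [Fin.lt_def] at huv ⊢
    simp only [hσ, Equiv.swap_apply_def]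
    split_ifs <;> simp_all [Fin.ext_iff, Prod.ext_iff] <;> omega
  have key1 : (p, q) ∈ invSet x' := by
    rw [mem_invSet]
    constructor
    · rw [Fin.lt_def]; omega
    · rw [happ, happ, hσp, hσq]; exact hv
  have key2 : (p, q) ∉ invSet x := by
    rw [mem_invSet]
    intro h
    exact absurd hv (not_lt.mpr h.2.le)
  have hbij : ((invSet x').erase (p, q)).card = (invSet x).card := by
    apply Finset.card_bij' (fun a _ => (σ a.1, σ a.2)) (fun a _ => (σ a.1, σ a.2))
    · intro a ha
      rw [Finset.mem_erase] at ha
      obtain ⟨hne, hmem⟩ := ha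
      obtain ⟨u, v⟩ := a
      rw [mem_invSet] at hmem ⊢
      refine ⟨hsorted u v hmem.1 hne, ?_⟩
      have := hmem.2
      rw [happ, happ] at this
      exact this
    · intro a ha
      obtain ⟨u, v⟩ := a
      rw [mem_invSet] at ha
      rw [Finset.mem_erase]
      have hne : (u, v) ≠ (p, q) := by
        intro h
        simp only [Prod.mk.injEq] at h
        apply key2
        rw [mem_invSet, ← h.1, ← h.2]
        exact ha
      constructor
      · intro h
        simp only [Prod.mk.injEq] at h
        have h1 : u = σ p := by rw [← h.1]; simp [hσ]
        have h2 : v = σ q := by rw [← h.2]; simp [hσ]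
        rw [hσp] at h1; rw [hσq] at h2
        subst h1; subst h2
        rw [Fin.lt_def] at ha
        omega
      · rw [mem_invSet]
        refine ⟨hsorted u v ha.1 hne, ?_⟩
        rw [happ, happ]
        simp only [hσ, Equiv.swap_apply_self]
        exact ha.2
    · intro a _; simp [hσ, Equiv.swap_apply_self]
    · intro a _; simp [hσ, Equiv.swap_apply_self]
  rw [len_eq_invSet, len_eq_invSet, ← hbij, Finset.card_erase_of_mem key1]
  have : 0 < (invSet x').card := Finset.card_pos.mpr ⟨_, key1⟩
  omega

lemma len_swap_formula : ∀ (d : ℕ) (x : Equiv.Perm (Fin n)) (p q : Fin n),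
    (q : ℕ) = (p : ℕ) + 1 + d → x p < x q →
    len (x * Equiv.swap p q) = len x + 1 +
      2 * ((Finset.univ.filter (fun t : Fin n => p < t ∧ t < q ∧ x p < x t ∧ x t < x q)).card) := by
  intro d
  induction d using Nat.strong_induction_on with
  | _ d IH =>
  intro x p q hq hv
  rcases Nat.eq_zero_or_pos d with hd | hd
  · subst hd
    have hM : (Finset.univ.filter (fun t : Fin n => p < t ∧ t < q ∧ x p < x t ∧ x t < x q)) = ∅ := by
      apply Finset.filter_false_of_mem
      intro t _
      rw [Fin.lt_def, Fin.lt_def]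
      intro ⟨h1, h2, _⟩
      omega
    rw [hM]
    simp only [Finset.card_empty, Nat.mul_zero, Nat.add_zero]
    exact len_swap_adjacent x p q (by omega) hv
  · have hqlt := q.isLt
    set r : Fin n := ⟨(p : ℕ) + 1, by omega⟩ with hr
    have hrval : (r : ℕ) = (p : ℕ) + 1 := rfl
    have hpr : p ≠ r := by intro h; rw [Fin.ext_iff] at h; simp [hrval] at h
    have hrq : r ≠ q := by intro h; rw [Fin.ext_iff] at h; omega
    have hpq : p ≠ q := by intro h; rw [Fin.ext_iff] at h; omega
    have hswapid : Equiv.swap p q = Equiv.swap p r * Equiv.swap r q * Equiv.swap p r := by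
      have := Equiv.swap_mul_swap_mul_swap (x := q) (y := r) (z := p) hrq.symm hpq.symm
      rw [Equiv.swap_comm r p, Equiv.swap_comm q r] at this
      exact this.symm
    have hassoc : x * Equiv.swap p q = ((x * Equiv.swap p r) * Equiv.swap r q) * Equiv.swap p r := by
      rw [hswapid]; group
    set y := x * Equiv.swap p r with hy
    have hyp : y p = x r := by simp [hy, Equiv.swap_apply_left]
    have hyr : y r = x p := by simp [hy, Equiv.swap_apply_right]
    have hyq : y q = x q := by
      simp [hy]
      rw [Equiv.swap_apply_of_ne_of_ne hpq.symm hrq.symm]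
    have hyt : ∀ t : Fin n, t ≠ p → t ≠ r → y t = x t := by
      intro t h1 h2
      simp [hy]
      rw [Equiv.swap_apply_of_ne_of_ne h1 h2]
    set y2 := y * Equiv.swap r q with hy2
    have hy2p : y2 p = x r := by
      simp only [hy2, Equiv.Perm.mul_apply]
      rw [Equiv.swap_apply_of_ne_of_ne hpr hpq, hyp]
    have hy2r : y2 r = x q := by
      simp only [hy2, Equiv.Perm.mul_apply, Equiv.swap_apply_left, hyq]
    -- middle set equality
    have hMy : (Finset.univ.filter (fun t : Fin n => r < t ∧ t < q ∧ y r < y t ∧ y t < y q))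
        = (Finset.univ.filter (fun t : Fin n => r < t ∧ t < q ∧ x p < x t ∧ x t < x q)) := by
      apply Finset.filter_congr
      intro t _
      by_cases h1 : r < t
      · have htp : t ≠ p := by
          intro h; subst h; rw [Fin.lt_def] at h1; omega
        have htr : t ≠ r := by intro h; subst h; exact lt_irrefl _ h1
        rw [hyt t htp htr, hyr, hyq]
      · simp [h1]
    have hxinj := x.injective
    have hxrp : x r ≠ x p := fun h => hpr ((hxinj h).symm)
    have hxrq : x r ≠ x q := fun h => hrq (hxinj h)
    have hstep2 : len y2 = len y + 1 +
        2 * ((Finset.univ.filter (fun t : Fin n => r < t ∧ t < q ∧ x p < x t ∧ x t < x q)).card) := by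
      rw [← hMy]
      exact IH (d - 1) (by omega) y r q (by omega) (by rw [hyr, hyq]; exact hv)
    have hfinal : len (x * Equiv.swap p q) = len (y2 * Equiv.swap p r) := by rw [hassoc]
    rcases lt_trichotomy (x r) (x p) with hc | hc | hc
    · -- case (ii) : x r < x p
      have hlenx : len x = len y + 1 := by
        have h1 : len (y * Equiv.swap p r) = len y + 1 := by
          apply len_swap_adjacent y p r rfl
          rw [hyp, hyr]; exact hc
        rwa [hy, Equiv.mul_swap_mul_self] at h1
      have hMeq : (Finset.univ.filter (fun t : Fin n => p < t ∧ t < q ∧ x p < x t ∧ x t < x q))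
          = (Finset.univ.filter (fun t : Fin n => r < t ∧ t < q ∧ x p < x t ∧ x t < x q)) := by
        apply Finset.filter_congr
        intro t _
        simp only [Fin.lt_def, hrval]
        constructor
        · intro ⟨h1, h2, h3, h4⟩
          have htr : t ≠ r := by
            intro h; subst h; exact absurd h3 (not_lt.mpr hc.le)
          simp only [ne_eq, Fin.ext_iff, hrval] at htr
          exact ⟨by omega, h2, h3, h4⟩
        · intro ⟨h1, h2, h3, h4⟩
          exact ⟨by omega, h2, h3, h4⟩
      have hlast : len (y2 * Equiv.swap p r) = len y2 + 1 := by
        apply len_swap_adjacent y2 p r rfl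
        rw [hy2p, hy2r]; exact hc.trans hv
      rw [hfinal, hlast, hstep2, hMeq]
      omega
    · exact absurd hc hxrp
    · -- x p < x r
      have hleny : len y = len x + 1 := by
        apply len_swap_adjacent x p r rfl hc
      rcases lt_trichotomy (x r) (x q) with hc2 | hc2 | hc2
      · -- case (i) : x p < x r < x q
        have hrmem : r ∈ (Finset.univ.filter (fun t : Fin n => p < t ∧ t < q ∧ x p < x t ∧ x t < x q)) := by
          simp only [Finset.mem_filter, Finset.mem_univ, true_and, Fin.lt_def, hrval]
          exact ⟨by omega, by omega, hc, hc2⟩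
        have hMeq : (Finset.univ.filter (fun t : Fin n => p < t ∧ t < q ∧ x p < x t ∧ x t < x q))
            = insert r (Finset.univ.filter (fun t : Fin n => r < t ∧ t < q ∧ x p < x t ∧ x t < x q)) := by
          ext t
          simp only [Finset.mem_filter, Finset.mem_univ, true_and, Finset.mem_insert, Fin.lt_def, hrval]
          constructor
          · intro ⟨h1, h2, h3, h4⟩
            by_cases htr : t = r
            · exact Or.inl htr
            · simp only [ne_eq, Fin.ext_iff, hrval] at htr
              exact Or.inr ⟨by omega, h2, h3, h4⟩
          · intro h
            rcases h with h | ⟨h1, h2, h3, h4⟩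
            · subst h
              exact ⟨by omega, by omega, hc, hc2⟩
            · exact ⟨by omega, h2, h3, h4⟩
        have hrnotmem : r ∉ (Finset.univ.filter (fun t : Fin n => r < t ∧ t < q ∧ x p < x t ∧ x t < x q)) := by
          simp only [Finset.mem_filter, Finset.mem_univ, true_and]
          intro ⟨h1, _⟩
          exact absurd h1 (lt_irrefl r)
        have hcard : (Finset.univ.filter (fun t : Fin n => p < t ∧ t < q ∧ x p < x t ∧ x t < x q)).card
            = (Finset.univ.filter (fun t : Fin n => r < t ∧ t < q ∧ x p < x t ∧ x t < x q)).card + 1 := by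
          rw [hMeq, Finset.card_insert_of_notMem hrnotmem]
        have hlast : len (y2 * Equiv.swap p r) = len y2 + 1 := by
          apply len_swap_adjacent y2 p r rfl
          rw [hy2p, hy2r]; exact hc2
        rw [hfinal, hlast, hstep2, hcard]
        omega
      · exact absurd hc2 hxrq
      · -- case (iii) : x q < x r
        have hMeq : (Finset.univ.filter (fun t : Fin n => p < t ∧ t < q ∧ x p < x t ∧ x t < x q))
            = (Finset.univ.filter (fun t : Fin n => r < t ∧ t < q ∧ x p < x t ∧ x t < x q)) := by
          apply Finset.filter_congr
          intro t _
          simp only [Fin.lt_def, hrval]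
          constructor
          · intro ⟨h1, h2, h3, h4⟩
            have htr : t ≠ r := by
              intro h; subst h; exact absurd h4 (not_lt.mpr hc2.le)
            simp only [ne_eq, Fin.ext_iff, hrval] at htr
            exact ⟨by omega, h2, h3, h4⟩
          · intro ⟨h1, h2, h3, h4⟩
            exact ⟨by omega, h2, h3, h4⟩
        have hlast : len y2 = len (y2 * Equiv.swap p r) + 1 := by
          have h1 : len ((y2 * Equiv.swap p r) * Equiv.swap p r) = len (y2 * Equiv.swap p r) + 1 := by
            apply len_swap_adjacent _ p r rfl
            have e1 : (y2 * Equiv.swap p r) p = y2 r := by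
              simp only [Equiv.Perm.mul_apply, Equiv.swap_apply_left]
            have e2 : (y2 * Equiv.swap p r) r = y2 p := by
              simp only [Equiv.Perm.mul_apply, Equiv.swap_apply_right]
            rw [e1, e2, hy2p, hy2r]
            exact hc2
          rwa [Equiv.mul_swap_mul_self] at h1
        rw [hfinal, hstep2, hMeq] at *
        omega

/-! ### Section 4: descent characterization, easy direction -/

lemma len_swap_gt (x : Equiv.Perm (Fin n)) (p q : Fin n) (hpq : p < q) (hv : x p < x q) :
    len x < len (x * Equiv.swap p q) := by
  have h := len_swap_formula ((q : ℕ) - (p : ℕ) - 1) x p q (by rw [Fin.lt_def] at hpq; omega) hv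
  omega

lemma len_swap_lt (x : Equiv.Perm (Fin n)) (p q : Fin n) (hpq : p < q) (hv : x q < x p) :
    len (x * Equiv.swap p q) < len x := by
  set y := x * Equiv.swap p q with hy
  have h1 : y p = x q := by simp [hy, Equiv.swap_apply_left]
  have h2 : y q = x p := by simp [hy, Equiv.swap_apply_right]
  have h := len_swap_gt y p q hpq (by rw [h1, h2]; exact hv)
  rwa [hy, Equiv.mul_swap_mul_self] at h

lemma swap_mul_eq_mul_swap (x : Equiv.Perm (Fin n)) (P Q : Fin n) :
    Equiv.swap (x P) (x Q) * x = x * Equiv.swap P Q := by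
  rw [Equiv.swap_apply_apply]
  group

lemma step_of_swap (x : Equiv.Perm (Fin n)) (p q : Fin n) (hpq : p < q) (hv : x p < x q) :
    BruhatStep x (x * Equiv.swap p q) := by
  refine ⟨x p, x q, x.injective.ne (ne_of_lt hpq), ?_, len_swap_gt x p q hpq hv⟩
  rw [swap_mul_eq_mul_swap]

lemma s_eq_swap {m : ℕ} (h1 : 1 ≤ m) (h2 : m < n) :
    s n m = Equiv.swap (⟨m - 1, by omega⟩ : Fin n) ⟨m, h2⟩ := by
  unfold s; rw [dif_pos ⟨h1, h2⟩]

lemma isRightDescent_iff (w : Equiv.Perm (Fin n)) (m : ℕ) :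
    IsRightDescent w m ↔ (1 ≤ m ∧ m ≤ n - 1 ∧ act w (m + 1) < act w m) := by
  constructor
  · rintro ⟨h1, h2, h3⟩
    refine ⟨h1, h2, ?_⟩
    have hmn : m < n := by omega
    set P : Fin n := ⟨m - 1, by omega⟩ with hP
    set Q : Fin n := ⟨m, hmn⟩ with hQ
    have hPQ : P < Q := by rw [Fin.lt_def]; simp [hP, hQ]; omega
    rw [s_eq_swap h1 hmn] at h3
    have ham : act w m = (w P : ℕ) + 1 := by
      rw [act_of_mem w h1 (by omega)]
    have ham1 : act w (m + 1) = (w Q : ℕ) + 1 := by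
      rw [act_of_mem w (by omega) (by omega)]
      congr 2
    rw [ham, ham1]
    rcases lt_trichotomy (w P) (w Q) with hc | hc | hc
    · exact absurd h3 (not_lt.mpr (le_of_lt (len_swap_gt w P Q hPQ hc)))
    · exact absurd (w.injective hc) (by simp [hP, hQ, Fin.ext_iff]; omega)
    · rw [Fin.lt_def] at hc; omega
  · rintro ⟨h1, h2, h3⟩
    refine ⟨h1, h2, ?_⟩
    have hmn : m < n := by omega
    set P : Fin n := ⟨m - 1, by omega⟩ with hP
    set Q : Fin n := ⟨m, hmn⟩ with hQ
    have hPQ : P < Q := by rw [Fin.lt_def]; simp [hP, hQ]; omega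
    rw [s_eq_swap h1 hmn]
    apply len_swap_lt w P Q hPQ
    have ham : act w m = (w P : ℕ) + 1 := by rw [act_of_mem w h1 (by omega)]
    have ham1 : act w (m + 1) = (w Q : ℕ) + 1 := by
      rw [act_of_mem w (by omega) (by omega)]; congr 2
    rw [Fin.lt_def]; omega

lemma isLeftDescent_iff (w : Equiv.Perm (Fin n)) (m : ℕ) :
    IsLeftDescent w m ↔ (1 ≤ m ∧ m ≤ n - 1 ∧ act w⁻¹ (m + 1) < act w⁻¹ m) := by
  constructor
  · rintro ⟨h1, h2, h3⟩
    refine ⟨h1, h2, ?_⟩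
    have hmn : m < n := by omega
    set A : Fin n := ⟨m - 1, by omega⟩ with hA
    set B : Fin n := ⟨m, hmn⟩ with hB
    set P : Fin n := w⁻¹ A with hPd
    set Q : Fin n := w⁻¹ B with hQd
    have hwP : w P = A := by simp [hPd]
    have hwQ : w Q = B := by simp [hQd]
    have hAB : (A : ℕ) < (B : ℕ) := by simp [hA, hB]; omega
    have hform : s n m * w = w * Equiv.swap P Q := by
      rw [s_eq_swap h1 hmn]
      have hsw : Equiv.swap (⟨m - 1, by omega⟩ : Fin n) ⟨m, hmn⟩ = Equiv.swap (w P) (w Q) := by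
        rw [hwP, hwQ]
      rw [hsw, swap_mul_eq_mul_swap]
    rw [hform] at h3
    have haP : act w⁻¹ m = (P : ℕ) + 1 := by
      rw [act_of_mem w⁻¹ h1 (by omega)]
    have haQ : act w⁻¹ (m + 1) = (Q : ℕ) + 1 := by
      rw [act_of_mem w⁻¹ (by omega) (by omega)]; congr 2
    rw [haP, haQ]
    have hPQne : P ≠ Q := by
      intro h; rw [hPd, hQd] at h
      have := w⁻¹.injective h
      rw [hA, hB, Fin.ext_iff] at this; simp at this; omega
    rcases lt_trichotomy P Q with hc | hc | hc
    · exfalso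
      have := len_swap_gt w P Q hc (by rw [hwP, hwQ, Fin.lt_def]; exact hAB)
      omega
    · exact absurd hc hPQne
    · rw [Fin.lt_def] at hc; omega
  · rintro ⟨h1, h2, h3⟩
    refine ⟨h1, h2, ?_⟩
    have hmn : m < n := by omega
    set A : Fin n := ⟨m - 1, by omega⟩ with hA
    set B : Fin n := ⟨m, hmn⟩ with hB
    set P : Fin n := w⁻¹ A with hPd
    set Q : Fin n := w⁻¹ B with hQd
    have hwP : w P = A := by simp [hPd]
    have hwQ : w Q = B := by simp [hQd]
    have hform : s n m * w = w * Equiv.swap P Q := by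
      rw [s_eq_swap h1 hmn]
      have hsw : Equiv.swap (⟨m - 1, by omega⟩ : Fin n) ⟨m, hmn⟩ = Equiv.swap (w P) (w Q) := by
        rw [hwP, hwQ]
      rw [hsw, swap_mul_eq_mul_swap]
    rw [hform]
    have haP : act w⁻¹ m = (P : ℕ) + 1 := by rw [act_of_mem w⁻¹ h1 (by omega)]
    have haQ : act w⁻¹ (m + 1) = (Q : ℕ) + 1 := by
      rw [act_of_mem w⁻¹ (by omega) (by omega)]; congr 2
    have hQP : Q < P := by rw [Fin.lt_def]; omega
    rw [Equiv.swap_comm]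
    apply len_swap_lt w Q P hQP
    rw [hwP, hwQ, Fin.lt_def]
    simp [hA, hB]; omega


lemma act_val (x : Equiv.Perm (Fin n)) (P : Fin n) : act x ((P : ℕ) + 1) = (x P : ℕ) + 1 := by
  have hP := P.isLt
  rw [act_of_mem x (by omega) (by omega)]
  have h : (⟨(P : ℕ) + 1 - 1, by omega⟩ : Fin n) = P := by apply Fin.ext; simp
  rw [h]

lemma act_mul_swap (x : Equiv.Perm (Fin n)) (P Q : Fin n) (k : ℕ) :
    act (x * Equiv.swap P Q) k =
      if k = (P : ℕ) + 1 then act x ((Q : ℕ) + 1)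
      else if k = (Q : ℕ) + 1 then act x ((P : ℕ) + 1)
      else act x k := by
  by_cases hk : 1 ≤ k ∧ k ≤ n
  · rw [act_of_mem _ hk.1 hk.2]
    have hmul : ((x * Equiv.swap P Q) ⟨k - 1, by omega⟩ : Fin n)
        = x ((Equiv.swap P Q) ⟨k - 1, by omega⟩) := rfl
    by_cases h1 : k = (P : ℕ) + 1
    · rw [if_pos h1, act_val]
      have hkP : (⟨k - 1, by omega⟩ : Fin n) = P := by apply Fin.ext; simp; omega
      rw [hmul, hkP, Equiv.swap_apply_left]
    · rw [if_neg h1]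
      by_cases h2 : k = (Q : ℕ) + 1
      · rw [if_pos h2, act_val]
        have hkQ : (⟨k - 1, by omega⟩ : Fin n) = Q := by apply Fin.ext; simp; omega
        rw [hmul, hkQ, Equiv.swap_apply_right]
      · rw [if_neg h2, act_of_mem x hk.1 hk.2]
        rw [hmul, Equiv.swap_apply_of_ne_of_ne]
        · intro h; rw [Fin.ext_iff] at h; simp at h; omega
        · intro h; rw [Fin.ext_iff] at h; simp at h; omega
  · rw [act_of_not_mem _ hk, act_of_not_mem _ hk]
    have hP := P.isLt
    have hQ := Q.isLt
    rw [if_neg (by omega), if_neg (by omega)]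

lemma rnk_mul_swap (x : Equiv.Perm (Fin n)) (P Q : Fin n) (hPQ : P < Q) (hv : x P < x Q)
    (p q : ℕ) :
    rnk (x * Equiv.swap P Q) p q +
      (if (P : ℕ) + 1 ≤ p ∧ p ≤ (Q : ℕ) ∧ (x P : ℕ) + 1 ≤ q ∧ q ≤ (x Q : ℕ) then 1 else 0)
    = rnk x p q := by
  have haP : act x ((P : ℕ) + 1) = (x P : ℕ) + 1 := act_val x P
  have haQ : act x ((Q : ℕ) + 1) = (x Q : ℕ) + 1 := act_val x Q
  have hPQ' : (P : ℕ) < (Q : ℕ) := hPQ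
  have hv' : (x P : ℕ) < (x Q : ℕ) := hv
  induction p with
  | zero => rw [rnk_zero, rnk_zero, if_neg (by omega)]
  | succ p ih =>
    rw [rnk_succ, rnk_succ, act_mul_swap]
    by_cases h1 : p + 1 = (P : ℕ) + 1
    · rw [if_pos h1, haQ, h1]
      rw [if_neg (show ¬((P : ℕ) + 1 ≤ p ∧ p ≤ (Q : ℕ) ∧ (x P : ℕ) + 1 ≤ q ∧ q ≤ (x Q : ℕ)) by
        omega)] at ih
      have hPv := haP
      split_ifs <;> omega
    · rw [if_neg h1]
      by_cases h2 : p + 1 = (Q : ℕ) + 1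
      · rw [if_pos h2, haP, h2]
        have hQv := haQ
        split_ifs at ih ⊢ <;> omega
      · rw [if_neg h2]
        split_ifs at ih ⊢ <;> omega

lemma rnk_le_of_swap_incr (x : Equiv.Perm (Fin n)) (P Q : Fin n) (hPQ : P < Q)
    (hv : x P < x Q) (p q : ℕ) : rnk (x * Equiv.swap P Q) p q ≤ rnk x p q := by
  have := rnk_mul_swap x P Q hPQ hv p q
  omega

lemma rnk_le_of_step {x y : Equiv.Perm (Fin n)} (h : BruhatStep x y) (p q : ℕ) :
    rnk y p q ≤ rnk x p q := by
  obtain ⟨a, c, hac, heq, hlen⟩ := h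
  set P := x⁻¹ a with hPd
  set Q := x⁻¹ c with hQd
  have hxP : x P = a := by simp [hPd]
  have hxQ : x Q = c := by simp [hQd]
  have heq' : y = x * Equiv.swap P Q := by
    rw [heq, ← hxP, ← hxQ, swap_mul_eq_mul_swap]
  have hPQ : P ≠ Q := by
    intro h; rw [← hxP, ← hxQ, h] at hac; exact hac rfl
  rcases lt_trichotomy P Q with hc | hc | hc
  · rcases lt_trichotomy (x P) (x Q) with hc2 | hc2 | hc2
    · rw [heq']; exact rnk_le_of_swap_incr x P Q hc hc2 p q
    · exact absurd (x.injective hc2) hPQ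
    · exfalso
      have := len_swap_lt x P Q hc hc2
      rw [← heq'] at this; omega
  · exact absurd hc hPQ
  · have heq'' : y = x * Equiv.swap Q P := by rw [heq', Equiv.swap_comm]
    rcases lt_trichotomy (x Q) (x P) with hc2 | hc2 | hc2
    · rw [heq'']; exact rnk_le_of_swap_incr x Q P hc hc2 p q
    · exact absurd (x.injective hc2) hPQ.symm
    · exfalso
      have := len_swap_lt x Q P hc hc2
      rw [← heq''] at this; omega

lemma rnk_le_of_bruhatLE {x w : Equiv.Perm (Fin n)} (h : BruhatLE x w) (p q : ℕ) :
    rnk w p q ≤ rnk x p q := by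
  induction h with
  | refl => exact le_rfl
  | tail _ hstep ih => exact le_trans (rnk_le_of_step hstep p q) ih

/-! ### Section 5: rank criterion for Bruhat order -/

lemma rnk_q_zero (w : Equiv.Perm (Fin n)) (p : ℕ) : rnk w p 0 = 0 := by
  unfold rnk
  rw [Finset.card_eq_zero, Finset.filter_eq_empty_iff]
  intro k hk
  rw [Finset.mem_Icc] at hk
  have := act_pos w hk.1
  omega

lemma eq_of_rnk_eq {x w : Equiv.Perm (Fin n)}
    (h : ∀ p q, p ≤ n → q ≤ n → rnk x p q = rnk w p q) : x = w := by
  apply perm_ext_of_act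
  intro p hp1 hp2
  have key : ∀ q, q ≤ n → ((if act x p ≤ q then 1 else 0 : ℕ) = if act w p ≤ q then 1 else 0) := by
    intro q hq
    have e1 := rnk_succ x (p - 1) q
    have e2 := rnk_succ w (p - 1) q
    rw [show p - 1 + 1 = p by omega] at e1 e2
    have h1 := h p q hp2 hq
    have h2 := h (p - 1) q (by omega) hq
    omega
  have hx1 := act_pos x hp1
  have hx2 := act_le x hp1 hp2
  have hw1 := act_pos w hp1
  have hw2 := act_le w hp1 hp2
  have k1 := key (act x p) hx2
  have k2 := key (act w p) hw2
  split_ifs at k1 k2 <;> omega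

def mu (w x : Equiv.Perm (Fin n)) : ℕ :=
  ∑ pq ∈ (Finset.Icc 1 n) ×ˢ (Finset.Icc 1 n), (rnk x pq.1 pq.2 - rnk w pq.1 pq.2)

lemma le_of_rnk_le_aux (w : Equiv.Perm (Fin n)) :
    ∀ (N : ℕ) (x : Equiv.Perm (Fin n)),
      (∀ p q, p ≤ n → q ≤ n → rnk w p q ≤ rnk x p q) → mu w x ≤ N → BruhatLE x w := by
  intro N
  induction N with
  | zero =>
    intro x h hmu
    have heq : ∀ p q, p ≤ n → q ≤ n → rnk x p q = rnk w p q := by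
      intro p q hp hq
      rcases Nat.eq_zero_or_pos p with hp0 | hp0
      · subst hp0; rw [rnk_zero, rnk_zero]
      rcases Nat.eq_zero_or_pos q with hq0 | hq0
      · subst hq0; rw [rnk_q_zero, rnk_q_zero]
      have hmem : (p, q) ∈ (Finset.Icc 1 n) ×ˢ (Finset.Icc 1 n) := by
        rw [Finset.mem_product, Finset.mem_Icc, Finset.mem_Icc]; omega
      have h1 : (rnk x p q - rnk w p q) ≤ mu w x :=
        Finset.single_le_sum (f := fun pq => rnk x pq.1 pq.2 - rnk w pq.1 pq.2)
          (fun _ _ => Nat.zero_le _) hmem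
      have h2 := h p q hp hq
      omega
    rw [eq_of_rnk_eq heq]
    exact Relation.ReflTransGen.refl
  | succ N IH =>
    intro x h hmu
    by_cases hxw : x = w
    · rw [hxw]
      exact Relation.ReflTransGen.refl
    -- find the first difference
    have hex : ∃ k, act x k ≠ act w k := by
      by_contra hno
      push_neg at hno
      exact hxw (perm_ext_of_act fun p _ _ => hno p)
    set i := Nat.find hex with hidef
    have hineq : act x i ≠ act w i := Nat.find_spec hex
    have himin : ∀ k, k < i → act x k = act w k := by
      intro k hk
      by_contra hne
      exact Nat.find_min hex hk hne
    have hi1 : 1 ≤ i := by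
      by_contra hc
      have : i = 0 := by omega
      rw [this] at hineq
      rw [act_of_not_mem x (by omega), act_of_not_mem w (by omega)] at hineq
      exact hineq rfl
    have hin : i ≤ n := by
      by_contra hc
      rw [act_of_not_mem x (by omega), act_of_not_mem w (by omega)] at hineq
      exact hineq rfl
    have ha1 : 1 ≤ act x i := act_pos x hi1
    have han : act x i ≤ n := act_le x hi1 hin
    have hc1 : 1 ≤ act w i := act_pos w hi1
    have hcn : act w i ≤ n := act_le w hi1 hin
    have hagree : ∀ k, 1 ≤ k → k ≤ i - 1 → act x k = act w k := fun k _ h2 => himin k (by omega)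
    have hac : act x i < act w i := by
      rcases lt_trichotomy (act x i) (act w i) with hlt | heqq | hgt
      · exact hlt
      · exact absurd heqq hineq
      · exfalso
        have e1 : rnk x i (act x i - 1) = rnk x (i - 1) (act x i - 1) := by
          have := rnk_succ x (i - 1) (act x i - 1)
          rw [show i - 1 + 1 = i by omega] at this
          rw [this, if_neg (by omega)]
          omega
        have e2 : rnk w i (act x i - 1) = rnk w (i - 1) (act x i - 1) + 1 := by
          have := rnk_succ w (i - 1) (act x i - 1)
          rw [show i - 1 + 1 = i by omega] at this
          rw [this, if_pos (by omega)]
        have e3 : rnk x (i - 1) (act x i - 1) = rnk w (i - 1) (act x i - 1) :=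
          rnk_congr _ hagree
        have e4 := h i (act x i - 1) hin (by omega)
        omega
    -- find q'
    have hexq : ∃ r, i < r ∧ act x i < act x r ∧ act x r ≤ act w i := by
      refine ⟨act x⁻¹ (act w i), ?_, ?_, ?_⟩
      · have hR1 : 1 ≤ act x⁻¹ (act w i) := act_pos x⁻¹ (by omega)
        have hxR : act x (act x⁻¹ (act w i)) = act w i := act_act_inv x (by omega) hcn
        have hne : act x⁻¹ (act w i) ≠ i := by
          intro hh; rw [hh] at hxR; omega
        have hnlt : ¬ (act x⁻¹ (act w i) < i) := by
          intro hlt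
          have h5 := himin _ hlt
          rw [hxR] at h5
          have := act_injective w h5.symm
          omega
        omega
      · rw [act_act_inv x (by omega) hcn]; exact hac
      · rw [act_act_inv x (by omega) hcn]
    set q' := Nat.find hexq with hq'def
    have hq'i : i < q' := (Nat.find_spec hexq).1
    have hq'a : act x i < act x q' := (Nat.find_spec hexq).2.1
    have hq'c : act x q' ≤ act w i := (Nat.find_spec hexq).2.2
    have hq'min : ∀ r, i < r → r < q' → ¬(act x i < act x r ∧ act x r ≤ act w i) := by
      intro r h1 h2 hcon
      exact Nat.find_min hexq h2 ⟨h1, hcon⟩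
    have hq'n : q' ≤ n := by
      by_contra hcon
      rw [act_of_not_mem x (by omega)] at hq'c
      omega
    have hbn : act x q' ≤ n := act_le x (by omega) hq'n
    -- positions
    set P : Fin n := ⟨i - 1, by omega⟩ with hPdef
    set Q : Fin n := ⟨q' - 1, by omega⟩ with hQdef
    have hPv : (P : ℕ) + 1 = i := by simp [hPdef]; omega
    have hQv : (Q : ℕ) + 1 = q' := by simp [hQdef]; omega
    have haPv : act x i = (x P : ℕ) + 1 := by rw [← hPv, act_val]
    have haQv : act x q' = (x Q : ℕ) + 1 := by rw [← hQv, act_val]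
    have hPQ : P < Q := by rw [Fin.lt_def]; simp [hPdef, hQdef]; omega
    have hvPQ : x P < x Q := by rw [Fin.lt_def]; omega
    set x' := x * Equiv.swap P Q with hx'def
    have hstep : BruhatStep x x' := step_of_swap x P Q hPQ hvPQ
    have hrnk : ∀ p q, rnk x' p q +
        (if i ≤ p ∧ p < q' ∧ act x i ≤ q ∧ q < act x q' then 1 else 0) = rnk x p q := by
      intro p q
      have hms := rnk_mul_swap x P Q hPQ hvPQ p q
      have hcond : (i ≤ p ∧ p < q' ∧ act x i ≤ q ∧ q < act x q') ↔
          ((P : ℕ) + 1 ≤ p ∧ p ≤ (Q : ℕ) ∧ (x P : ℕ) + 1 ≤ q ∧ q ≤ (x Q : ℕ)) := by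
        constructor <;> intro hh <;> omega
      rw [if_congr hcond rfl rfl]
      exact hms
    -- strictness on the region
    have hstrict : ∀ p q, i ≤ p → p < q' → act x i ≤ q → q < act x q' →
        rnk w p q + 1 ≤ rnk x p q := by
      intro p q hip hpq' haq hqb
      have hpn : p ≤ n := by omega
      have e0 : rnk x (i - 1) q = rnk w (i - 1) q := rnk_congr q hagree
      have e0c : rnk x (i - 1) (act w i) = rnk w (i - 1) (act w i) := rnk_congr _ hagree
      have hsx := rnk_split x (q := q) (show i - 1 ≤ p by omega)
      have hsxc := rnk_split x (q := act w i) (show i - 1 ≤ p by omega)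
      have hsw := rnk_split w (q := q) (show i - 1 ≤ p by omega)
      have hswc := rnk_split w (q := act w i) (show i - 1 ≤ p by omega)
      rw [show i - 1 + 1 = i by omega] at hsx hsxc hsw hswc
      have hbc : act x q' ≤ act w i := hq'c
      -- characterize the x-filters
      have hmemx : ∀ k, i < k → k ≤ p → (act x k ≤ q ↔ act x k < act x i) ∧
          (act x k ≤ act w i ↔ act x k < act x i) := by
        intro k hk1 hk2
        have hnb := hq'min k hk1 (by omega)
        have hne : act x k ≠ act x i := by
          intro hh
          have := act_injective x hh
          omega
        constructor <;> constructor <;> intro <;> omega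
      have hx1 : (Finset.Icc i p).filter (fun k => act x k ≤ q)
          = insert i ((Finset.Icc (i + 1) p).filter (fun k => act x k < act x i)) := by
        ext k
        simp only [Finset.mem_filter, Finset.mem_Icc, Finset.mem_insert]
        constructor
        · rintro ⟨⟨hk1, hk2⟩, hk3⟩
          by_cases hki : k = i
          · exact Or.inl hki
          · have hik : i < k := by omega
            have := (hmemx k hik hk2).1.mp hk3
            exact Or.inr ⟨⟨by omega, hk2⟩, this⟩
        · rintro (hk | ⟨⟨hk1, hk2⟩, hk3⟩)
          · subst hk; exact ⟨⟨le_rfl, by omega⟩, by omega⟩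
          · refine ⟨⟨by omega, hk2⟩, ?_⟩
            have := (hmemx k (by omega) hk2).1.mpr hk3
            exact this
      have hx2 : (Finset.Icc i p).filter (fun k => act x k ≤ act w i)
          = insert i ((Finset.Icc (i + 1) p).filter (fun k => act x k < act x i)) := by
        ext k
        simp only [Finset.mem_filter, Finset.mem_Icc, Finset.mem_insert]
        constructor
        · rintro ⟨⟨hk1, hk2⟩, hk3⟩
          by_cases hki : k = i
          · exact Or.inl hki
          · have hik : i < k := by omega
            have := (hmemx k hik hk2).2.mp hk3
            exact Or.inr ⟨⟨by omega, hk2⟩, this⟩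
        · rintro (hk | ⟨⟨hk1, hk2⟩, hk3⟩)
          · subst hk; exact ⟨⟨le_rfl, by omega⟩, by omega⟩
          · refine ⟨⟨by omega, hk2⟩, ?_⟩
            have := (hmemx k (by omega) hk2).2.mpr hk3
            exact this
      have hinot : i ∉ (Finset.Icc (i + 1) p).filter (fun k => act x k < act x i) := by
        simp only [Finset.mem_filter, Finset.mem_Icc]
        omega
      have hcx1 : ((Finset.Icc i p).filter (fun k => act x k ≤ q)).card
          = ((Finset.Icc (i + 1) p).filter (fun k => act x k < act x i)).card + 1 := by
        rw [hx1, Finset.card_insert_of_notMem hinot]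
      have hcx2 : ((Finset.Icc i p).filter (fun k => act x k ≤ act w i)).card
          = ((Finset.Icc (i + 1) p).filter (fun k => act x k < act x i)).card + 1 := by
        rw [hx2, Finset.card_insert_of_notMem hinot]
      -- w side
      have hwc_mem : i ∈ (Finset.Icc i p).filter (fun k => act w k ≤ act w i) := by
        simp only [Finset.mem_filter, Finset.mem_Icc]
        exact ⟨⟨le_rfl, by omega⟩, le_rfl⟩
      have hwsub : (Finset.Icc i p).filter (fun k => act w k ≤ q)
          ⊆ ((Finset.Icc i p).filter (fun k => act w k ≤ act w i)).erase i := by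
        intro k hk
        simp only [Finset.mem_filter, Finset.mem_Icc, Finset.mem_erase] at *
        constructor
        · intro hh; subst hh; omega
        · exact ⟨hk.1, by omega⟩
      have hwcard : ((Finset.Icc i p).filter (fun k => act w k ≤ q)).card + 1
          ≤ ((Finset.Icc i p).filter (fun k => act w k ≤ act w i)).card := by
        have h1 := Finset.card_le_card hwsub
        rw [Finset.card_erase_of_mem hwc_mem] at h1
        have h2 : 0 < ((Finset.Icc i p).filter (fun k => act w k ≤ act w i)).card :=
          Finset.card_pos.mpr ⟨i, hwc_mem⟩
        omega
      have hcc := h p (act w i) hpn hcn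
      omega
    -- new hypothesis
    have h' : ∀ p q, p ≤ n → q ≤ n → rnk w p q ≤ rnk x' p q := by
      intro p q hp hq
      have hr := hrnk p q
      by_cases hreg : i ≤ p ∧ p < q' ∧ act x i ≤ q ∧ q < act x q'
      · have hs := hstrict p q hreg.1 hreg.2.1 hreg.2.2.1 hreg.2.2.2
        rw [if_pos hreg] at hr
        omega
      · rw [if_neg hreg] at hr
        have := h p q hp hq
        omega
    -- measure decreases
    have hmu' : mu w x' < mu w x := by
      apply Finset.sum_lt_sum
      · intro pq _
        have hr := hrnk pq.1 pq.2
        have := h' pq.1 pq.2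
        split_ifs at hr <;> omega
      · refine ⟨(i, act x i), ?_, ?_⟩
        · rw [Finset.mem_product, Finset.mem_Icc, Finset.mem_Icc]; omega
        · have hr := hrnk i (act x i)
          rw [if_pos ⟨le_rfl, hq'i, le_rfl, hq'a⟩] at hr
          have hs := hstrict i (act x i) le_rfl hq'i le_rfl hq'a
          simp only
          omega
    exact Relation.ReflTransGen.head hstep (IH x' h' (by omega))

lemma le_of_rnk_le {x w : Equiv.Perm (Fin n)}
    (h : ∀ p q, p ≤ n → q ≤ n → rnk w p q ≤ rnk x p q) : BruhatLE x w :=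
  le_of_rnk_le_aux w (mu w x) x h le_rfl

/-! ### Section 6: block form of bigrassmannian permutations -/

def blkF (i j K p : ℕ) : ℕ :=
  if p ≤ min i j - K then p
  else if p ≤ i then j + (p - (min i j - K))
  else if p ≤ i + j - (min i j - K) then p - (i - (min i j - K))
  else p

def IsBlk (z : Equiv.Perm (Fin n)) (i j K : ℕ) : Prop :=
  ∀ p, 1 ≤ p → p ≤ n → act z p = blkF i j K p

lemma blkF_mem {i j K p : ℕ} (hK1 : 1 ≤ K) (hKi : K ≤ i) (hKj : K ≤ j)
    (hin : i + K ≤ n) (hjn : j + K ≤ n) (hp1 : 1 ≤ p) (hp2 : p ≤ n) :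
    1 ≤ blkF i j K p ∧ blkF i j K p ≤ n := by
  unfold blkF; split_ifs <;> omega

lemma blkF_inv {i j K p : ℕ} (hK1 : 1 ≤ K) (hKi : K ≤ i) (hKj : K ≤ j)
    (hin : i + K ≤ n) (hjn : j + K ≤ n) :
    blkF i j K (blkF j i K p) = p := by
  unfold blkF; split_ifs <;> omega

lemma isBlk_inv {z : Equiv.Perm (Fin n)} {i j K : ℕ} (hK1 : 1 ≤ K) (hKi : K ≤ i) (hKj : K ≤ j)
    (hin : i + K ≤ n) (hjn : j + K ≤ n) (h : IsBlk z i j K) : IsBlk z⁻¹ j i K := by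
  intro p hp1 hp2
  have hv := blkF_mem hK1 hKj hKi hjn hin hp1 hp2 (i := j) (j := i)
  have hzv : act z (blkF j i K p) = p := by
    rw [h _ hv.1 hv.2, blkF_inv hK1 hKi hKj hin hjn]
  calc act z⁻¹ p = act z⁻¹ (act z (blkF j i K p)) := by rw [hzv]
  _ = blkF j i K p := act_inv_act z hv.1 hv.2

lemma isBlk_rnk {z : Equiv.Perm (Fin n)} {i j K : ℕ} (hK1 : 1 ≤ K) (hKi : K ≤ i) (hKj : K ≤ j)
    (hin : i + K ≤ n) (hjn : j + K ≤ n) (h : IsBlk z i j K) :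
    ∀ p q, p ≤ n → q ≤ n → rnk z p q = min (min p q) ((min i j - K) + (p - i) + (q - j)) := by
  intro p q hp hq
  induction p with
  | zero => rw [rnk_zero]; omega
  | succ p ih =>
    rw [rnk_succ, h (p + 1) (by omega) hp, ih (by omega)]
    unfold blkF
    split_ifs <;> omega

lemma isBlk_cork {z : Equiv.Perm (Fin n)} {i j K : ℕ} (hK1 : 1 ≤ K) (hKi : K ≤ i) (hKj : K ≤ j)
    (hin : i + K ≤ n) (hjn : j + K ≤ n) (h : IsBlk z i j K) : cork z i j = K := by
  have := isBlk_rnk hK1 hKi hKj hin hjn h i j (by omega) (by omega)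
  unfold cork
  omega

lemma incr_chain {f : ℕ → ℕ} {lo hi : ℕ} (h : ∀ m, lo ≤ m → m + 1 ≤ hi → f m < f (m + 1)) :
    ∀ a b, lo ≤ a → a < b → b ≤ hi → f a < f b := by
  intro a b
  induction b using Nat.strong_induction_on with
  | _ b IH =>
  intro ha hab hb
  rcases Nat.eq_or_lt_of_le (Nat.succ_le_of_lt hab) with h1 | h1
  · have : b = a + 1 := by omega
    subst this
    exact h a ha hb
  · have h2 : f a < f (b - 1) := IH (b - 1) (by omega) ha (by omega) (by omega)
    have h3 : f (b - 1) < f (b - 1 + 1) := h (b - 1) (by omega) (by omega)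
    rw [show b - 1 + 1 = b by omega] at h3
    omega

lemma ge_chain {f : ℕ → ℕ} {hi : ℕ} (h : ∀ m, 1 ≤ m → m + 1 ≤ hi → f m < f (m + 1))
    (h1 : 1 ≤ f 1) : ∀ p, 1 ≤ p → p ≤ hi → p ≤ f p := by
  intro p
  induction p with
  | zero => omega
  | succ p ih =>
    intro _ hp
    rcases Nat.eq_zero_or_pos p with h0 | h0
    · subst h0; simpa using h1
    · have := ih h0 (by omega)
      have := h p h0 hp
      omega

lemma seg_lemma {S : Finset ℕ} {N : ℕ} (hsub : S ⊆ Finset.Icc 1 N)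
    (hdown : ∀ p ∈ S, ∀ p', 1 ≤ p' → p' ≤ p → p' ∈ S) : S = Finset.Icc 1 S.card := by
  apply Finset.Subset.antisymm
  · intro p hp
    have h1 : Finset.Icc 1 p ⊆ S := by
      intro k hk
      rw [Finset.mem_Icc] at hk
      exact hdown p hp k hk.1 hk.2
    have h2 := Finset.card_le_card h1
    rw [Nat.card_Icc] at h2
    have h3 := hsub hp
    rw [Finset.mem_Icc] at h3
    rw [Finset.mem_Icc]
    omega
  · intro m hm
    rw [Finset.mem_Icc] at hm
    by_contra hms
    have hup : ∀ p ∈ S, p < m := by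
      intro p hp
      by_contra hpm
      exact hms (hdown p hp m hm.1 (by omega))
    have h1 : S ⊆ Finset.Icc 1 (m - 1) := by
      intro k hk
      have := hsub hk
      rw [Finset.mem_Icc] at *
      have := hup k hk
      omega
    have h2 := Finset.card_le_card h1
    rw [Nat.card_Icc] at h2
    omega

lemma rnk_inv_symm (z : Equiv.Perm (Fin n)) {i j : ℕ} (hi : i ≤ n) (hj : j ≤ n) :
    rnk z⁻¹ j i = rnk z i j := by
  unfold rnk
  apply Finset.card_bij' (fun k _ => act z⁻¹ k) (fun k _ => act z k)
  · intro k hk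
    simp only [Finset.mem_filter, Finset.mem_Icc] at *
    have h1 := act_pos z⁻¹ hk.1.1
    refine ⟨⟨h1, hk.2⟩, ?_⟩
    rw [act_act_inv z hk.1.1 (le_trans hk.1.2 hj)]
    exact hk.1.2
  · intro k hk
    simp only [Finset.mem_filter, Finset.mem_Icc] at *
    have h1 := act_pos z hk.1.1
    refine ⟨⟨h1, hk.2⟩, ?_⟩
    rw [act_inv_act z hk.1.1 (le_trans hk.1.2 hi)]
    exact hk.1.2
  · intro k hk
    simp only [Finset.mem_filter, Finset.mem_Icc] at hk
    exact act_act_inv z hk.1.1 (le_trans hk.1.2 hj)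
  · intro k hk
    simp only [Finset.mem_filter, Finset.mem_Icc] at hk
    exact act_inv_act z hk.1.1 (le_trans hk.1.2 hi)

lemma rnk_lower (z : Equiv.Perm (Fin n)) {p q : ℕ} (hp : p ≤ n) (hq : q ≤ n) :
    p + q ≤ n + rnk z p q := by
  have hsplit : (Finset.Icc 1 p).filter (fun k => act z k ≤ q) ∪
      (Finset.Icc 1 p).filter (fun k => ¬ (act z k ≤ q)) = Finset.Icc 1 p :=
    Finset.filter_union_filter_not_eq _ _
  have hdisj : Disjoint ((Finset.Icc 1 p).filter (fun k => act z k ≤ q))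
      ((Finset.Icc 1 p).filter (fun k => ¬ (act z k ≤ q))) :=
    Finset.disjoint_filter_filter_not _ _ _
  have hcard : rnk z p q + ((Finset.Icc 1 p).filter (fun k => ¬ (act z k ≤ q))).card = p := by
    unfold rnk
    rw [← Finset.card_union_of_disjoint hdisj, hsplit, Nat.card_Icc]
    omega
  have hbound : ((Finset.Icc 1 p).filter (fun k => ¬ (act z k ≤ q))).card ≤ n - q := by
    have h2 : ((Finset.Icc 1 p).filter (fun k => ¬ (act z k ≤ q))).card
        ≤ (Finset.Icc (q + 1) n).card := by
      apply Finset.card_le_card_of_injOn (act z)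
      · intro k hk
        simp only [Finset.mem_coe, Finset.mem_filter, Finset.mem_Icc] at *
        have := act_le z hk.1.1 (le_trans hk.1.2 hp)
        omega
      · intro a _ b _ hab
        exact act_injective z hab
    rw [Nat.card_Icc] at h2
    omega
  omega

lemma blkF_K0 {i j p : ℕ} : blkF i j 0 p = p := by
  unfold blkF; split_ifs <;> omega

/-- Classification: a permutation whose one-line notation increases except at `i`,
and whose inverse increases except at `j`, is the block permutation. -/
lemma classify {z : Equiv.Perm (Fin n)} {i j : ℕ}
    (hi1 : 1 ≤ i) (hi2 : i ≤ n - 1) (hj1 : 1 ≤ j) (hj2 : j ≤ n - 1)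
    (hz : ∀ m, 1 ≤ m → m ≤ n - 1 → (act z (m + 1) < act z m ↔ m = i))
    (hzi : ∀ m, 1 ≤ m → m ≤ n - 1 → (act z⁻¹ (m + 1) < act z⁻¹ m ↔ m = j)) :
    IsBlk z i j (min i j - rnk z i j) ∧ 1 ≤ min i j - rnk z i j := by
  have hn2 : 2 ≤ n := by omega
  set X := act z with hX
  set Y := act z⁻¹ with hY
  set r := rnk z i j with hr
  -- strict increase off the descent
  have incrX : ∀ m, 1 ≤ m → m + 1 ≤ n → m ≠ i → X m < X (m + 1) := by
    intro m h1 h2 hne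
    have hiff := hz m h1 (by omega)
    have hXne : X m ≠ X (m + 1) := by
      intro hh; have := act_injective z hh; omega
    have := hiff.not.mpr (by omega)
    omega
  have incrY : ∀ m, 1 ≤ m → m + 1 ≤ n → m ≠ j → Y m < Y (m + 1) := by
    intro m h1 h2 hne
    have hiff := hzi m h1 (by omega)
    have hYne : Y m ≠ Y (m + 1) := by
      intro hh; have := act_injective z⁻¹ hh; omega
    have := hiff.not.mpr (by omega)
    omega
  have monoX_low : ∀ a bb, 1 ≤ a → a < bb → bb ≤ i → X a < X bb := by
    intro a bb ha hab hb
    exact incr_chain (lo := 1) (hi := i) (fun m h1 h2 => incrX m h1 (by omega) (by omega))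
      a bb ha hab hb
  have monoX_high : ∀ a bb, i + 1 ≤ a → a < bb → bb ≤ n → X a < X bb := by
    intro a bb ha hab hb
    exact incr_chain (lo := i + 1) (hi := n) (fun m h1 h2 => incrX m (by omega) h2 (by omega))
      a bb ha hab hb
  have monoY_low : ∀ a bb, 1 ≤ a → a < bb → bb ≤ j → Y a < Y bb := by
    intro a bb ha hab hb
    exact incr_chain (lo := 1) (hi := j) (fun m h1 h2 => incrY m h1 (by omega) (by omega))
      a bb ha hab hb
  have monoY_high : ∀ a bb, j + 1 ≤ a → a < bb → bb ≤ n → Y a < Y bb := by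
    intro a bb ha hab hb
    exact incr_chain (lo := j + 1) (hi := n) (fun m h1 h2 => incrY m (by omega) h2 (by omega))
      a bb ha hab hb
  have geX_low : ∀ p, 1 ≤ p → p ≤ i → p ≤ X p := by
    apply ge_chain (fun m h1 h2 => incrX m h1 (by omega) (by omega))
    exact act_pos z (by omega)
  have geY_low : ∀ v, 1 ≤ v → v ≤ j → v ≤ Y v := by
    apply ge_chain (fun m h1 h2 => incrY m h1 (by omega) (by omega))
    exact act_pos z⁻¹ (by omega)
  have hri : r ≤ i := rnk_le_p z i j
  have hrj : r ≤ j := rnk_le_q z i j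
  have hrlb : i + j ≤ n + r := rnk_lower z (by omega) (by omega)
  -- the initial-segment characterization
  have Lr1 : ∀ p, 1 ≤ p → p ≤ i → (X p ≤ j ↔ p ≤ r) := by
    intro p hp1 hp2
    set S := (Finset.Icc 1 i).filter (fun k => X k ≤ j) with hS
    have hcard : S.card = r := rfl
    have hseg : S = Finset.Icc 1 r := by
      rw [← hcard]
      apply seg_lemma (N := i) (Finset.filter_subset _ _)
      intro a ha a' h1 h2
      simp only [hS, Finset.mem_filter, Finset.mem_Icc] at *
      refine ⟨⟨h1, by omega⟩, ?_⟩
      rcases Nat.eq_or_lt_of_le h2 with hh | hh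
      · rw [hh]; exact ha.2
      · have := monoX_low a' a h1 hh (by omega)
        omega
    have : p ∈ S ↔ p ∈ Finset.Icc 1 r := by rw [hseg]
    simp only [hS, Finset.mem_filter, Finset.mem_Icc] at this
    constructor
    · intro hh
      exact ((this.mp ⟨⟨hp1, hp2⟩, hh⟩)).2
    · intro hh
      exact (this.mpr ⟨hp1, hh⟩).2
  have Lr1' : ∀ v, 1 ≤ v → v ≤ j → (Y v ≤ i ↔ v ≤ r) := by
    intro v hv1 hv2
    set S := (Finset.Icc 1 j).filter (fun k => Y k ≤ i) with hS
    have hcard : S.card = r := by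
      have := rnk_inv_symm z (i := i) (j := j) (by omega) (by omega)
      exact this
    have hseg : S = Finset.Icc 1 r := by
      rw [← hcard]
      apply seg_lemma (N := j) (Finset.filter_subset _ _)
      intro a ha a' h1 h2
      simp only [hS, Finset.mem_filter, Finset.mem_Icc] at *
      refine ⟨⟨h1, by omega⟩, ?_⟩
      rcases Nat.eq_or_lt_of_le h2 with hh | hh
      · rw [hh]; exact ha.2
      · have := monoY_low a' a h1 hh (by omega)
        omega
    have : v ∈ S ↔ v ∈ Finset.Icc 1 r := by rw [hseg]
    simp only [hS, Finset.mem_filter, Finset.mem_Icc] at this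
    constructor
    · intro hh
      exact ((this.mp ⟨⟨hv1, hv2⟩, hh⟩)).2
    · intro hh
      exact (this.mpr ⟨hv1, hh⟩).2
  have hYX : ∀ p, 1 ≤ p → p ≤ n → Y (X p) = p := fun p h1 h2 => act_inv_act z h1 h2
  have hXY : ∀ v, 1 ≤ v → v ≤ n → X (Y v) = v := fun v h1 h2 => act_act_inv z h1 h2
  have hX1 : ∀ p, 1 ≤ p → 1 ≤ X p := fun p h1 => act_pos z h1
  have hXn : ∀ p, 1 ≤ p → p ≤ n → X p ≤ n := fun p h1 h2 => act_le z h1 h2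
  have hY1 : ∀ v, 1 ≤ v → 1 ≤ Y v := fun v h1 => act_pos z⁻¹ h1
  have hYn : ∀ v, 1 ≤ v → v ≤ n → Y v ≤ n := fun v h1 h2 => act_le z⁻¹ h1 h2
  -- case 1
  have case1 : ∀ p, 1 ≤ p → p ≤ r → X p = p := by
    intro p hp1 hp2
    have h1 : X p ≤ j := (Lr1 p hp1 (by omega)).mpr hp2
    have h2 : p ≤ X p := geX_low p hp1 (by omega)
    have h3 : X p ≤ Y (X p) := geY_low (X p) (hX1 p hp1) h1
    rw [hYX p hp1 (by omega)] at h3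
    omega
  -- claimY : values above j with row ≤ i sit beyond r
  have claimY : ∀ u, 1 ≤ u → j + u ≤ n → Y (j + u) ≤ i → r + u ≤ Y (j + u) := by
    intro u
    induction u with
    | zero => omega
    | succ u ihu =>
      intro _ hun hYi
      rcases Nat.eq_zero_or_pos u with h0 | h0
      · subst h0
        simp only [Nat.zero_add] at *
        by_contra hcon
        push_neg at hcon
        have hYr : Y (j + 1) ≤ r := by omega
        have h1 : X (Y (j + 1)) = Y (j + 1) := case1 _ (hY1 _ (by omega)) hYr
        rw [hXY (j + 1) (by omega) (by omega)] at h1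
        omega
      · have hmono : Y (j + u) < Y (j + u + 1) := by
          have := incrY (j + u) (by omega) (by omega) (by omega)
          rw [show j + u + 1 = j + (u + 1) by ring] at this ⊢
          exact this
        rw [show j + (u + 1) = j + u + 1 by ring] at hYi hun ⊢
        have := ihu (by omega) (by omega) (by omega)
        omega
  -- case 2
  have case2 : ∀ u, 1 ≤ u → u ≤ i - r → X (r + u) = j + u := by
    intro u hu1 hu2
    have hgtj : ∀ u', 1 ≤ u' → u' ≤ i - r → j < X (r + u') := by
      intro u' h1 h2
      have := (Lr1 (r + u') (by omega) (by omega)).not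
      omega
    have hge : ∀ u', 1 ≤ u' → u' ≤ i - r → j + u' ≤ X (r + u') := by
      intro u'
      induction u' with
      | zero => omega
      | succ u' ihu =>
        intro _ h2
        rcases Nat.eq_zero_or_pos u' with h0 | h0
        · subst h0
          simp only [Nat.zero_add] at *
          have := hgtj 1 (by omega) (by omega)
          omega
        · have h3 := ihu h0 (by omega)
          have h4 : X (r + u') < X (r + u' + 1) :=
            monoX_low (r + u') (r + u' + 1) (by omega) (by omega) (by omega)
          rw [show r + (u' + 1) = r + u' + 1 by ring]
          omega
    have h5 : j < X (r + u) := hgtj u hu1 hu2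
    have h6 : X (r + u) ≤ n := hXn _ (by omega) (by omega)
    have h7 := claimY (X (r + u) - j) (by omega) (by omega)
    rw [show j + (X (r + u) - j) = X (r + u) by omega] at h7
    rw [hYX (r + u) (by omega) (by omega)] at h7
    have h8 := h7 (by omega)
    have h9 := hge u hu1 hu2
    omega
  -- value-set characterization
  have vset : ∀ v, 1 ≤ v → v ≤ n → (Y v ≤ i ↔ (v ≤ r ∨ (j < v ∧ v ≤ j + (i - r)))) := by
    intro v hv1 hv2
    constructor
    · intro hYv
      by_cases hvj : v ≤ j
      · left
        exact (Lr1' v hv1 hvj).mp hYv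
      · right
        push_neg at hvj
        set p := Y v with hp
        have hp1 : 1 ≤ p := hY1 v hv1
        have hXp : X p = v := hXY v hv1 hv2
        have hpr : ¬ p ≤ r := by
          intro hh
          have := case1 p hp1 hh
          omega
        refine ⟨hvj, ?_⟩
        have := case2 (p - r) (by omega) (by omega)
        rw [show r + (p - r) = p by omega] at this
        omega
    · intro hv
      rcases hv with hv | ⟨hv1', hv2'⟩
      · have h1 := case1 v hv1 hv
        have h2 : Y (X v) = v := hYX v hv1 (by omega)
        rw [h1] at h2
        omega
      · have h1 := case2 (v - j) (by omega) (by omega)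
        rw [show j + (v - j) = v by omega] at h1
        have h2 : Y (X (r + (v - j))) = r + (v - j) := hYX _ (by omega) (by omega)
        rw [h1] at h2
        omega
  -- cases 3 and 4 combined
  have case34 : ∀ u, 1 ≤ u → u ≤ n - i →
      X (i + u) = if u ≤ j - r then r + u else i + u := by
    have notmem : ∀ u, 1 ≤ u → u ≤ n - i →
        (r < X (i + u) ∧ (X (i + u) ≤ j ∨ j + (i - r) < X (i + u))) := by
      intro u h1 h2
      have hmem := (vset (X (i + u)) (hX1 _ (by omega)) (hXn _ (by omega) (by omega))).not
      have hY' : Y (X (i + u)) = i + u := hYX _ (by omega) (by omega)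
      have : ¬ (Y (X (i + u)) ≤ i) := by omega
      have h3 := hmem.mp (by omega)
      push_neg at h3
      refine ⟨h3.1, ?_⟩
      rcases Nat.lt_or_ge j (X (i + u)) with hh | hh
      · right; exact h3.2 hh
      · left; omega
    have low34 : ∀ u, 1 ≤ u → u ≤ n - i →
        (if u ≤ j - r then r + u else i + u) ≤ X (i + u) := by
      intro u
      induction u with
      | zero => omega
      | succ u ihu =>
        intro _ h2
        rcases Nat.eq_zero_or_pos u with h0 | h0
        · subst h0
          simp only [Nat.zero_add] at *
          have hnm := notmem 1 (by omega) (by omega)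
          split_ifs with hc
          · omega
          · -- j - r = 0, i.e. r = j (r ≤ j always); then j + (i - r) = i
            have hrj' : r = j := by omega
            rcases hnm.2 with hh | hh
            · omega
            · omega
        · have hnm := notmem (u + 1) (by omega) h2
          have hmono : X (i + u) < X (i + u + 1) :=
            monoX_high (i + u) (i + u + 1) (by omega) (by omega) (by omega)
          have ih := ihu h0 (by omega)
          rw [show i + (u + 1) = i + u + 1 by ring] at hnm ⊢
          split_ifs with hc
          · split_ifs at ih with hc2
            · omega
            · omega
          · split_ifs at ih with hc2
            · -- u = j - r exactly
              have hu : u = j - r := by omega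
              -- X (i+u) ≥ r + u = j, so X (i+u+1) > j hence > j + (i-r)
              rcases hnm.2 with hh | hh
              · omega
              · omega
            · omega
    have high34 : ∀ k u, 1 ≤ u → u ≤ n - i → n - i - u = k →
        X (i + u) ≤ (if u ≤ j - r then r + u else i + u) := by
      intro k
      induction k with
      | zero =>
        intro u h1 h2 h3
        have hun : i + u = n := by omega
        have hXn' : X (i + u) ≤ n := hXn _ (by omega) (by omega)
        split_ifs with hc
        · -- n = i + u ≤ i + (j - r) ≤ n forces n = i + j - r; X n ≤ j
          have hnm := notmem u h1 h2
          rcases hnm.2 with hh | hh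
          · omega
          · omega
        · omega
      | succ k ihk =>
        intro u h1 h2 h3
        have hmono : X (i + u) < X (i + u + 1) :=
          monoX_high (i + u) (i + u + 1) (by omega) (by omega) (by omega)
        have ih := ihk (u + 1) (by omega) (by omega) (by omega)
        rw [show i + (u + 1) = i + u + 1 by ring] at ih
        have hnm := notmem u h1 h2
        split_ifs with hc
        · split_ifs at ih with hc2
          · omega
          · -- u ≤ j - r < u + 1 : u = j - r
            have hu : u = j - r := by omega
            rcases hnm.2 with hh | hh
            · omega
            · -- X (i+u) > j + (i - r) = i + (j - r) = i + u, but X (i+u) < X(i+u+1) ≤ i+u+1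
              omega
        · split_ifs at ih with hc2
          · omega
          · omega
    intro u h1 h2
    have := low34 u h1 h2
    have := high34 (n - i - u) u h1 h2 rfl
    omega
  -- K ≥ 1
  have hdesc : X (i + 1) < X i := (hz i hi1 hi2).mpr rfl
  have hK1 : 1 ≤ min i j - r := by
    by_contra hcon
    have hrmin : r = min i j := by omega
    -- then X p = p for p up to and beyond i, contradiction with descent at i
    have hXi : X i = i ∨ (i ≤ j ∧ X i = i) := by
      left
      rcases le_or_gt i j with hij | hij
      · exact case1 i hi1 (by omega)
      · -- r = j < i : use case34? p = i is in low range; use case2: u = i - r with j = r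
        have := case2 (i - r) (by omega) (by omega)
        rw [show r + (i - r) = i by omega] at this
        omega
    have hXi' : X i = i := by tauto
    have hXi1 : X (i + 1) = i + 1 := by
      have := case34 1 (by omega) (by omega)
      rw [show (if 1 ≤ j - r then r + 1 else i + 1) = i + 1 by
        split_ifs with hh
        · omega
        · rfl] at this
      omega
    omega
  refine ⟨?_, hK1⟩
  intro p hp1 hp2
  rw [show act z p = X p from rfl]
  unfold blkF
  have hrr : min i j - (min i j - r) = r := by omega
  split_ifs with c1 c2 c3
  · exact case1 p hp1 (by omega)
  · have := case2 (p - r) (by omega) (by omega)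
    rw [show r + (p - r) = p by omega] at this
    rw [this]
    omega
  · have := case34 (p - i) (by omega) (by omega)
    rw [show i + (p - i) = p by omega] at this
    rw [this, if_pos (by omega)]
    omega
  · have := case34 (p - i) (by omega) (by omega)
    rw [show i + (p - i) = p by omega] at this
    rw [this, if_neg (by omega)]

lemma cork_bounds (z : Equiv.Perm (Fin n)) {p q : ℕ} (hp1 : 1 ≤ p) (hp : p ≤ n) (hq1 : 1 ≤ q)
    (hq : q ≤ n) : cork z p q ≤ p ∧ cork z p q ≤ q ∧ p + cork z p q ≤ n ∧ q + cork z p q ≤ n := by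
  have h1 := rnk_lower z hp hq
  have h2 := rnk_le_p z p q
  have h3 := rnk_le_q z p q
  unfold cork
  omega

lemma isBlk_descent_iff {z : Equiv.Perm (Fin n)} {i j K : ℕ} (hK1 : 1 ≤ K) (hKi : K ≤ i)
    (hKj : K ≤ j) (hin : i + K ≤ n) (hjn : j + K ≤ n) (h : IsBlk z i j K) :
    ∀ m, 1 ≤ m → m ≤ n - 1 → (act z (m + 1) < act z m ↔ m = i) := by
  intro m h1 h2
  rw [h m h1 (by omega), h (m + 1) (by omega) (by omega)]
  unfold blkF
  split_ifs <;> omega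

lemma isBlk_bigrass {z : Equiv.Perm (Fin n)} {i j K : ℕ} (hK1 : 1 ≤ K) (hKi : K ≤ i)
    (hKj : K ≤ j) (hin : i + K ≤ n) (hjn : j + K ≤ n) (h : IsBlk z i j K) :
    Bigrassmannian z ∧ IsRightDescent z i ∧ IsLeftDescent z j := by
  have hiffR := isBlk_descent_iff hK1 hKi hKj hin hjn h
  have hinv : IsBlk z⁻¹ j i K := isBlk_inv hK1 hKi hKj hin hjn h
  have hiffL := isBlk_descent_iff hK1 hKj hKi hjn hin hinv
  have hRd : IsRightDescent z i := by
    rw [isRightDescent_iff]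
    exact ⟨by omega, by omega, (hiffR i (by omega) (by omega)).mpr rfl⟩
  have hLd : IsLeftDescent z j := by
    rw [isLeftDescent_iff]
    exact ⟨by omega, by omega, (hiffL j (by omega) (by omega)).mpr rfl⟩
  refine ⟨⟨⟨j, hLd, ?_⟩, ⟨i, hRd, ?_⟩⟩, hRd, hLd⟩
  · intro m hm
    rw [isLeftDescent_iff] at hm
    exact (hiffL m hm.1 hm.2.1).mp hm.2.2
  · intro m hm
    rw [isRightDescent_iff] at hm
    exact (hiffR m hm.1 hm.2.1).mp hm.2.2

lemma bigrass_isBlk {z : Equiv.Perm (Fin n)} {i j : ℕ} (hbig : Bigrassmannian z)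
    (hR : IsRightDescent z i) (hL : IsLeftDescent z j) :
    IsBlk z i j (cork z i j) ∧ 1 ≤ cork z i j := by
  obtain ⟨⟨jL, hjL, hjLu⟩, ⟨iR, hiR, hiRu⟩⟩ := hbig
  have hRi := (isRightDescent_iff z i).mp hR
  have hLj := (isLeftDescent_iff z j).mp hL
  have hz : ∀ m, 1 ≤ m → m ≤ n - 1 → (act z (m + 1) < act z m ↔ m = i) := by
    intro m h1 h2
    constructor
    · intro hd
      have hm : IsRightDescent z m := (isRightDescent_iff z m).mpr ⟨h1, h2, hd⟩
      have e1 := hiRu m hm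
      have e2 := hiRu i hR
      omega
    · intro hm; subst hm; exact hRi.2.2
  have hzi : ∀ m, 1 ≤ m → m ≤ n - 1 → (act z⁻¹ (m + 1) < act z⁻¹ m ↔ m = j) := by
    intro m h1 h2
    constructor
    · intro hd
      have hm : IsLeftDescent z m := (isLeftDescent_iff z m).mpr ⟨h1, h2, hd⟩
      have e1 := hjLu m hm
      have e2 := hjLu j hL
      omega
    · intro hm; subst hm; exact hLj.2.2
  have := classify hRi.1 hRi.2.1 hLj.1 hLj.2.1 hz hzi
  exact this

/-! ### Section 7: the permutations `ascRun`, `bAux`, `b` -/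

lemma act_one (p : ℕ) : act (1 : Equiv.Perm (Fin n)) p = p := by
  by_cases h : 1 ≤ p ∧ p ≤ n
  · rw [act_of_mem _ h.1 h.2]
    simp
    omega
  · rw [act_of_not_mem _ h]

lemma act_mul (u v : Equiv.Perm (Fin n)) (p : ℕ) : act (u * v) p = act u (act v p) := by
  by_cases h : 1 ≤ p ∧ p ≤ n
  · have hv1 : 1 ≤ act v p := act_pos v h.1
    have hv2 : act v p ≤ n := act_le v h.1 h.2
    rw [act_of_mem _ h.1 h.2, act_of_mem u hv1 hv2]
    have hfin : (⟨act v p - 1, by omega⟩ : Fin n) = v ⟨p - 1, by omega⟩ := by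
      have hv := act_of_mem v h.1 h.2
      rw [Fin.ext_iff]
      simp only [Fin.val_mk]
      omega
    rw [hfin]
    rfl
  · rw [act_of_not_mem _ h, act_of_not_mem v h, act_of_not_mem u h]

lemma act_s {a : ℕ} (h1 : 1 ≤ a) (h2 : a ≤ n - 1) (p : ℕ) :
    act (s n a) p = if p = a then a + 1 else if p = a + 1 then a else p := by
  have han : a < n := by omega
  have hP : ((⟨a - 1, by omega⟩ : Fin n) : ℕ) = a - 1 := rfl
  have hQ : ((⟨a, han⟩ : Fin n) : ℕ) = a := rfl
  have key := act_mul_swap (1 : Equiv.Perm (Fin n)) ⟨a - 1, by omega⟩ ⟨a, han⟩ p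
  rw [one_mul] at key
  rw [s_eq_swap h1 han, key, hP, hQ, act_one, act_one, act_one]
  split_ifs <;> omega

lemma ascRun_nil {a c : ℕ} (h : c + 1 ≤ a) : ascRun n a c = 1 := by
  unfold ascRun
  rw [show c + 1 - a = 0 by omega]
  simp

lemma ascRun_cons {a c : ℕ} (h : a ≤ c) : ascRun n a c = s n a * ascRun n (a + 1) c := by
  unfold ascRun
  rw [show c + 1 - a = (c - a) + 1 by omega, show c + 1 - (a + 1) = c - a by omega,
      List.range_succ_eq_map, List.map_cons, List.prod_cons, List.map_map]
  simp only [Nat.add_zero]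
  refine congrArg (fun z => s n a * z) ?_
  refine congrArg List.prod ?_
  apply List.map_congr_left
  intro t _
  simp only [Function.comp_apply]
  congr 1
  omega

lemma ascRun_act_aux : ∀ (d a : ℕ), 1 ≤ a → a + d ≤ n - 1 → ∀ p,
    act (ascRun n a (a + d)) p =
      if p = a + d + 1 then a else if a ≤ p ∧ p ≤ a + d then p + 1 else p := by
  intro d
  induction d with
  | zero =>
    intro a h1 h2 p
    rw [show a + 0 = a by omega, ascRun_cons (le_refl a),
        ascRun_nil (a := a + 1) (c := a) le_rfl, mul_one]
    rw [act_s h1 (by omega)]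
    split_ifs <;> omega
  | succ d ih =>
    intro a h1 h2 p
    rw [show a + (d + 1) = a + d + 1 by omega, ascRun_cons (by omega)]
    rw [act_mul]
    rw [show a + d + 1 = (a + 1) + d by omega, ih (a + 1) (by omega) (by omega)]
    rw [act_s h1 (by omega)]
    split_ifs <;> omega

lemma ascRun_act {a c : ℕ} (h1 : 1 ≤ a) (hac : a ≤ c) (h2 : c ≤ n - 1) (p : ℕ) :
    act (ascRun n a c) p = if p = c + 1 then a else if a ≤ p ∧ p ≤ c then p + 1 else p := by
  have := ascRun_act_aux (n := n) (c - a) a h1 (by omega) p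
  rw [show a + (c - a) = c by omega] at this
  exact this

lemma bAux_rec (i0 j0 k : ℕ) :
    bAux n i0 j0 (k + 1) = bAux n i0 (j0 + 1) k * ascRun n (i0 - (k + 1)) j0 := by
  unfold bAux
  rw [List.range_succ, List.map_append, List.prod_append]
  congr 1
  · congr 1
    apply List.map_congr_left
    intro t _
    congr 1
    omega
  · simp only [List.map_cons, List.map_nil, List.prod_cons, List.prod_nil, mul_one]
    congr 1
    omega

lemma bAux_act : ∀ (k i0 j0 : ℕ), 1 ≤ i0 → i0 ≤ j0 → j0 + k ≤ n - 1 → k + 1 ≤ i0 →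
    ∀ p, 1 ≤ p → p ≤ n → act (bAux n i0 j0 k) p = blkF j0 i0 (k + 1) p := by
  intro k
  induction k with
  | zero =>
    intro i0 j0 h1 h2 h3 h4 p hp1 hp2
    have hbase : bAux n i0 j0 0 = ascRun n i0 j0 := by
      unfold bAux
      rw [show List.range (0 + 1) = [0] from rfl, List.map_cons, List.map_nil,
          List.prod_cons, List.prod_nil, mul_one]
      congr 1 <;> omega
    rw [hbase, ascRun_act h1 h2 (by omega)]
    unfold blkF
    split_ifs <;> omega
  | succ k ih =>
    intro i0 j0 h1 h2 h3 h4 p hp1 hp2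
    rw [bAux_rec, act_mul]
    rw [ascRun_act (a := i0 - (k + 1)) (c := j0) (by omega) (by omega) (by omega)]
    set E := if p = j0 + 1 then i0 - (k + 1) else if i0 - (k + 1) ≤ p ∧ p ≤ j0 then p + 1 else p
      with hE
    have hEmem : 1 ≤ E ∧ E ≤ n := by
      rw [hE]; split_ifs <;> omega
    rw [ih i0 (j0 + 1) h1 (by omega) (by omega) (by omega) E hEmem.1 hEmem.2]
    rw [hE]
    unfold blkF
    split_ifs <;> omega

/-! ### Section 8: essential set and the main theorem -/

lemma rnk_row_plain (w : Equiv.Perm (Fin n)) {p' p : ℕ} (q : ℕ) (h : p' ≤ p) :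
    rnk w p q ≤ rnk w p' q + (p - p') := by
  have hs := rnk_split w (q := q) h
  have hc : ((Finset.Icc (p' + 1) p).filter (fun k => act w k ≤ q)).card
      ≤ (Finset.Icc (p' + 1) p).card := Finset.card_filter_le _ _
  rw [Nat.card_Icc] at hc
  omega

lemma rnk_col_plain (w : Equiv.Perm (Fin n)) (p : ℕ) {q' q : ℕ} (h : q' ≤ q) :
    rnk w p q ≤ rnk w p q' + (q - q') := by
  have hs := rnk_col_split w p h
  have hc : ((Finset.Icc 1 p).filter (fun k => q' < act w k ∧ act w k ≤ q)).card
      ≤ (Finset.Icc (q' + 1) q).card := by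
    apply Finset.card_le_card_of_injOn (act w)
    · intro k hk
      simp only [Finset.mem_coe, Finset.mem_filter, Finset.mem_Icc] at *
      omega
    · intro a ha b hb hab
      exact act_injective w hab
  rw [Nat.card_Icc] at hc
  omega

lemma rnk_row_excl (w : Equiv.Perm (Fin n)) {p' p p₀ q : ℕ} (h : p' ≤ p) (h0 : p' < p₀)
    (h0' : p₀ ≤ p) (hbig : q < act w p₀) :
    rnk w p q + 1 ≤ rnk w p' q + (p - p') := by
  have hs := rnk_split w (q := q) h
  have hsub : (Finset.Icc (p' + 1) p).filter (fun k => act w k ≤ q)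
      ⊆ (Finset.Icc (p' + 1) p).erase p₀ := by
    intro k hk
    simp only [Finset.mem_filter, Finset.mem_Icc, Finset.mem_erase] at *
    refine ⟨?_, hk.1⟩
    intro hh; subst hh; omega
  have hc := Finset.card_le_card hsub
  rw [Finset.card_erase_of_mem (by rw [Finset.mem_Icc]; omega), Nat.card_Icc] at hc
  omega

lemma rnk_col_excl (w : Equiv.Perm (Fin n)) {p q' q j₀ : ℕ} (h : q' ≤ q) (h1 : q' < j₀)
    (h2 : j₀ ≤ q) (h3 : j₀ ≤ n) (hrow : p < act w⁻¹ j₀) :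
    rnk w p q + 1 ≤ rnk w p q' + (q - q') := by
  have hs := rnk_col_split w p h
  have hc : ((Finset.Icc 1 p).filter (fun k => q' < act w k ∧ act w k ≤ q)).card
      ≤ ((Finset.Icc (q' + 1) q).erase j₀).card := by
    apply Finset.card_le_card_of_injOn (act w)
    · intro k hk
      simp only [Finset.mem_coe, Finset.mem_filter, Finset.mem_Icc, Finset.mem_erase] at *
      refine ⟨?_, by omega⟩
      intro hh
      have hkn : k ≤ n := by
        by_contra hkn
        rw [act_of_not_mem w (by omega)] at hh
        omega
      have := act_inv_act w hk.1.1 hkn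
      rw [hh] at this
      omega
    · intro a _ b _ hab
      exact act_injective w hab
  rw [Finset.card_erase_of_mem (by rw [Finset.mem_Icc]; omega), Nat.card_Icc] at hc
  omega

lemma rnk_col_mem (w : Equiv.Perm (Fin n)) {p j₀ : ℕ} (h1 : 1 ≤ j₀) (h2 : j₀ ≤ n)
    (hrow : act w⁻¹ j₀ ≤ p) : rnk w p (j₀ - 1) + 1 ≤ rnk w p j₀ := by
  have hs := rnk_col_split w p (show j₀ - 1 ≤ j₀ by omega)
  have hmem : act w⁻¹ j₀ ∈ (Finset.Icc 1 p).filter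
      (fun k => j₀ - 1 < act w k ∧ act w k ≤ j₀) := by
    simp only [Finset.mem_filter, Finset.mem_Icc]
    have ha := act_act_inv w h1 h2
    have := act_pos w⁻¹ h1
    rw [ha]
    omega
  have := Finset.card_pos.mpr ⟨_, hmem⟩
  omega

theorem stmt10' (w : Equiv.Perm (Fin n)) (i j : ℕ)
    (hij : (i, j) ∈ Ess w) :
    (∃! x : Equiv.Perm (Fin n),
        x ∈ BM w ∧ IsRightDescent x i ∧ IsLeftDescent x j) ∧
    (∀ x ∈ BM w, IsRightDescent x i → IsLeftDescent x j →
        x = b n j i (cork w i j - 1)) := by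
  obtain ⟨hi1, hi2, hj1, hj2, hE5, hE6, hE7, hE8⟩ := hij
  simp only at hi1 hi2 hj1 hj2 hE5 hE6 hE7 hE8
  have hn2 : 2 ≤ n := by omega
  set t := cork w i j with htdef
  set r := rnk w i j with hrdef
  have htr : t = min i j - r := rfl
  have hri : r ≤ i := rnk_le_p w i j
  have hrj : r ≤ j := rnk_le_q w i j
  have hrlow : i + j ≤ n + r := rnk_lower w (by omega) (by omega)
  -- t ≥ 1
  have ht1 : 1 ≤ t := by
    rcases le_or_gt i j with hle | hlt
    · -- r ≤ i - 1 since act w i > j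
      have hsub : (Finset.Icc 1 i).filter (fun k => act w k ≤ j)
          ⊆ (Finset.Icc 1 i).erase i := by
        intro k hk
        simp only [Finset.mem_filter, Finset.mem_Icc, Finset.mem_erase] at *
        refine ⟨?_, hk.1⟩
        intro hh; subst hh; omega
      have hc := Finset.card_le_card hsub
      rw [Finset.card_erase_of_mem (by rw [Finset.mem_Icc]; omega), Nat.card_Icc] at hc
      have : rnk w i j ≤ i - 1 := by
        unfold rnk at *
        omega
      omega
    · -- r ≤ j - 1 since act w⁻¹ j > i
      have hc : ((Finset.Icc 1 i).filter (fun k => act w k ≤ j)).card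
          ≤ ((Finset.Icc 1 j).erase j).card := by
        apply Finset.card_le_card_of_injOn (act w)
        · intro k hk
          simp only [Finset.mem_coe, Finset.mem_filter, Finset.mem_Icc, Finset.mem_erase] at *
          have hp := act_pos w hk.1.1
          refine ⟨?_, by omega⟩
          intro hh
          have hkn : k ≤ n := by omega
          have := act_inv_act w hk.1.1 hkn
          rw [hh] at this
          omega
        · intro a _ b _ hab
          exact act_injective w hab
      rw [Finset.card_erase_of_mem (by rw [Finset.mem_Icc]; omega), Nat.card_Icc] at hc
      have : rnk w i j ≤ j - 1 := by
        unfold rnk at *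
        omega
      omega
  have hti : t ≤ i := by omega
  have htj : t ≤ j := by omega
  have htn1 : i + t ≤ n := by omega
  have htn2 : j + t ≤ n := by omega
  -- the block permutation B
  set B := b n j i (t - 1) with hBdef
  have hBblk : IsBlk B i j t := by
    rw [hBdef]
    unfold b
    by_cases hji : j ≤ i
    · rw [if_pos hji]
      intro p hp1 hp2
      have := bAux_act (t - 1) j i hj1 hji (by omega) (by omega) p hp1 hp2
      rw [show t - 1 + 1 = t by omega] at this
      exact this
    · rw [if_neg hji]
      apply isBlk_inv ht1 htj hti htn2 htn1
      intro p hp1 hp2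
      have := bAux_act (t - 1) i j hi1 (by omega) (by omega) (by omega) p hp1 hp2
      rw [show t - 1 + 1 = t by omega] at this
      exact this
  have hBbig := isBlk_bigrass ht1 hti htj htn1 htn2 hBblk
  have hrnkB : ∀ p q, p ≤ n → q ≤ n →
      rnk B p q = min (min p q) (r + (p - i) + (q - j)) := by
    intro p q hp hq
    have := isBlk_rnk ht1 hti htj htn1 htn2 hBblk p q hp hq
    rw [this]
    congr 1
    omega
  -- B ≤ w
  have hBlew : BruhatLE B w := by
    apply le_of_rnk_le
    intro p q hp hq
    rw [hrnkB p q hp hq]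
    have h1 : rnk w p q ≤ min p q := le_min (rnk_le_p w p q) (rnk_le_q w p q)
    have h2 : rnk w p q ≤ r + (p - i) + (q - j) := by
      have e1 : rnk w p q ≤ rnk w (min p i) q + (p - min p i) :=
        rnk_row_plain w q (by omega)
      have e2 : rnk w (min p i) q ≤ rnk w (min p i) (min q j) + (q - min q j) :=
        rnk_col_plain w (min p i) (by omega)
      have e3 : rnk w (min p i) (min q j) ≤ rnk w i j := by
        have := rnk_mono_p w (p := i) (q := min q j) (show min p i ≤ i by omega)
        have := rnk_mono_q w (min p i) (show min q j ≤ j by omega)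
        have := rnk_mono_p w (p := i) (q := j) (show min p i ≤ i by omega)
        have h4 : rnk w (min p i) (min q j) ≤ rnk w i (min q j) :=
          rnk_mono_p w _ (by omega)
        have h5 : rnk w i (min q j) ≤ rnk w i j := rnk_mono_q w i (by omega)
        omega
      omega
    omega
  have hBmem : B ∈ BSet w := ⟨hBbig.1, hBlew⟩
  -- the strict essential-set bound
  have essb : ∀ p q, 1 ≤ p → p ≤ n → 1 ≤ q → q ≤ n → ¬(p = i ∧ q = j) →
      r + 1 ≤ rnk w p q + (i - p) + (j - q) := by
    intro p q hp1 hp hq1 hq hne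
    rcases lt_trichotomy p i with hpi | hpi | hpi
    · rcases lt_trichotomy q j with hqj | hqj | hqj
      · -- Z5
        have e1 : rnk w i j + 1 ≤ rnk w i q + (j - q) :=
          rnk_col_excl w (by omega) (by omega) (le_refl j) (by omega) (by omega)
        have e2 : rnk w i q + 1 ≤ rnk w p q + (i - p) :=
          rnk_row_excl w (by omega) (by omega) (le_refl i) (by omega)
        omega
      · -- Z4 with q = j
        rw [hqj]
        have e2 : rnk w i j + 1 ≤ rnk w p j + (i - p) :=
          rnk_row_excl w (by omega) (by omega) (le_refl i) (by omega)
        omega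
      · -- p < i, q > j : Z4 via monotonicity in q
        have e2 : rnk w i j + 1 ≤ rnk w p j + (i - p) :=
          rnk_row_excl w (by omega) (by omega) (le_refl i) (by omega)
        have e3 : rnk w p j ≤ rnk w p q := rnk_mono_q w p (by omega)
        omega
    · rw [hpi]
      rcases lt_trichotomy q j with hqj | hqj | hqj
      · -- Z3 at p = i
        have e1 : rnk w i j + 1 ≤ rnk w i q + (j - q) :=
          rnk_col_excl w (by omega) (by omega) (le_refl j) (by omega) (by omega)
        omega
      · exact absurd ⟨hpi, hqj⟩ hne
      · -- Z2
        have e1 : rnk w i (j + 1 - 1) + 1 ≤ rnk w i (j + 1) :=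
          rnk_col_mem w (by omega) (by omega) (by omega)
        rw [show j + 1 - 1 = j by omega] at e1
        have e2 : rnk w i (j + 1) ≤ rnk w i q := rnk_mono_q w i (by omega)
        omega
    · rcases le_or_gt j q with hqj | hqj
      · -- Z1
        have e1 : rnk w i j + 1 ≤ rnk w (i + 1) j := by
          have := rnk_succ w i j
          rw [if_pos hE7] at this
          omega
        have e2 : rnk w (i + 1) j ≤ rnk w p j := rnk_mono_p w j (by omega)
        have e3 : rnk w p j ≤ rnk w p q := rnk_mono_q w p hqj
        omega
      · -- Z3 general p > i
        have e1 : rnk w i j + 1 ≤ rnk w i q + (j - q) :=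
          rnk_col_excl w (by omega) (by omega) (le_refl j) (by omega) (by omega)
        have e2 : rnk w i q ≤ rnk w p q := rnk_mono_p w q (by omega)
        omega
  -- maximality of B
  have hmax : ∀ z ∈ BSet w, BruhatLE B z → z = B := by
    rintro z ⟨hzbig, hzlew⟩ hBz
    obtain ⟨hLex, hRex⟩ := hzbig
    obtain ⟨j', hj'd, hj'u⟩ := hLex
    obtain ⟨i', hi'd, hi'u⟩ := hRex
    have hzblk := bigrass_isBlk ⟨⟨j', hj'd, hj'u⟩, ⟨i', hi'd, hi'u⟩⟩ hi'd hj'd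
    set K' := cork z i' j' with hK'def
    have hi'1 : 1 ≤ i' := hi'd.1
    have hi'2 : i' ≤ n - 1 := hi'd.2.1
    have hj'1 : 1 ≤ j' := hj'd.1
    have hj'2 : j' ≤ n - 1 := hj'd.2.1
    have hKb := cork_bounds z (p := i') (q := j') (by omega) (by omega) (by omega) (by omega)
    have hK1 : 1 ≤ K' := hzblk.2
    set r' := min i' j' - K' with hr'def
    have hrnkz : ∀ p q, p ≤ n → q ≤ n →
        rnk z p q = min (min p q) (r' + (p - i') + (q - j')) :=
      isBlk_rnk hK1 (by omega) (by omega) (by omega) (by omega) hzblk.1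
    have hr'min : r' ≤ min i' j' := by omega
    -- B ≤ z gives rnk z i j ≤ rnk B i j = r
    have h1 : rnk z i j ≤ r := by
      have := rnk_le_of_bruhatLE hBz i j
      have hB := hrnkB i j (by omega) (by omega)
      rw [hB] at this
      omega
    -- z ≤ w gives rnk w ≤ rnk z
    have h2 : rnk w i' j' ≤ rnk z i' j' := rnk_le_of_bruhatLE hzlew i' j'
    have h3 : rnk z i' j' = r' := by
      rw [hrnkz i' j' (by omega) (by omega)]
      omega
    have h4 := hrnkz i j (by omega) (by omega)
    have hrlt : r < min i j := by omega
    by_cases hctr : i' = i ∧ j' = j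
    · obtain ⟨hii, hjj⟩ := hctr
      subst hii; subst hjj
      have h5 : rnk w i' j' ≤ r' := by omega
      have hr'r : r' = r := by omega
      have hK't : K' = t := by omega
      apply perm_ext_of_act
      intro p hp1 hp2
      rw [hzblk.1 p hp1 hp2, hBblk p hp1 hp2, hK't]
    · exfalso
      have he := essb i' j' (by omega) (by omega) (by omega) (by omega) hctr
      omega
  have hBBM : B ∈ BM w := ⟨hBmem, hmax⟩
  -- descents of B
  have hBrd : IsRightDescent B i := hBbig.2.1
  have hBld : IsLeftDescent B j := hBbig.2.2
  -- uniqueness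
  have huniq : ∀ x, x ∈ BM w → IsRightDescent x i → IsLeftDescent x j → x = B := by
    rintro x ⟨⟨hxbig, hxlew⟩, hxmax⟩ hxr hxl
    have hxblk := bigrass_isBlk hxbig hxr hxl
    set K'' := cork x i j with hK''def
    have hK''1 : 1 ≤ K'' := hxblk.2
    have hKb := cork_bounds x (p := i) (q := j) (by omega) (by omega) (by omega) (by omega)
    set r'' := min i j - K'' with hr''def
    have hrnkx : ∀ p q, p ≤ n → q ≤ n →
        rnk x p q = min (min p q) (r'' + (p - i) + (q - j)) :=
      isBlk_rnk hK''1 (by omega) (by omega) (by omega) (by omega) hxblk.1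
    have h1 : rnk w i j ≤ rnk x i j := rnk_le_of_bruhatLE hxlew i j
    have h2 : rnk x i j = r'' := by
      rw [hrnkx i j (by omega) (by omega)]
      omega
    have hrr : r ≤ r'' := by omega
    have hxB : BruhatLE x B := by
      apply le_of_rnk_le
      intro p q hp hq
      rw [hrnkx p q hp hq, hrnkB p q hp hq]
      omega
    exact (hxmax B hBmem hxB).symm
  constructor
  · exact ⟨B, ⟨hBBM, hBrd, hBld⟩, fun x hx => huniq x hx.1 hx.2.1 hx.2.2⟩
  · intro x hx h1 h2
    exact huniq x hx h1 h2

theorem stmt10 (n : ℕ) (w : Equiv.Perm (Fin n)) (i j : ℕ)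
    (hij : (i, j) ∈ Ess w) :
    (∃! x : Equiv.Perm (Fin n),
        x ∈ BM w ∧ IsRightDescent x i ∧ IsLeftDescent x j) ∧
    (∀ x ∈ BM w, IsRightDescent x i → IsLeftDescent x j →
        x = b n j i (cork w i j - 1)) :=
  stmt10' w i j hij

end Paper
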